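/- arXiv:1610.02557 — 10 statements merged into one kernel-verified Lean document; each statement's English description precedes it below -/
import Mathlib

section
/- Let X be a Banach lattice, ε ≥ 0, and let T : X → X be a linear map that is ε-band preserving. Then for every band projection P on X and every x ∈ X with P x = 0, one has ‖P (T x)‖ ≤ ε·‖x‖. -/
/-- `T` is `ε`-band preserving: for every `x` and every `y ≥ 0` disjoint from `x`,
`‖|T x| ⊓ y‖ ≤ ε * ‖x‖`. -/
def IsEpsBandPreserving {X : Type*} [NormedAddCommGroup X] [Lattice X]
    (ε : ℝ) (T : X → X) : Prop :=
  ∀ x y : X, 0 ≤ y → |x| ⊓ y = 0 → ‖|T x| ⊓ y‖ ≤ ε * ‖x‖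

/-- A band projection: a linear map `P` with `P ∘ P = P` and `0 ≤ P x ≤ x` for `x ≥ 0`. -/
def IsBandProjection {X : Type*} [NormedAddCommGroup X] [Lattice X] [HasSolidNorm X]
    [IsOrderedAddMonoid X] [Module ℝ X]
    (P : X →ₗ[ℝ] X) : Prop :=
  (∀ x, P (P x) = P x) ∧ ∀ x : X, 0 ≤ x → 0 ≤ P x ∧ P x ≤ x

section Aux

variable {X : Type*} [NormedAddCommGroup X] [Lattice X] [HasSolidNorm X]
  [IsOrderedAddMonoid X] [Module ℝ X]
  (P : X →ₗ[ℝ] X) (hP : IsBandProjection P)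

lemma bp_mono (hP : IsBandProjection P) {a b : X} (h : a ≤ b) : P a ≤ P b := by
  have h0 : 0 ≤ b - a := sub_nonneg.2 h
  have h1 := (hP.2 _ h0).1
  rw [map_sub] at h1
  exact sub_nonneg.1 h1

/-- A band projection commutes with `|·|`. -/
lemma bp_abs (hP : IsBandProjection P) (z : X) : P |z| = |P z| := by
  have hpos : (0:X) ≤ z⁺ := posPart_nonneg z
  have hneg : (0:X) ≤ z⁻ := negPart_nonneg z
  have hdisj : P z⁺ ⊓ P z⁻ = 0 := by
    apply le_antisymm
    · calc P z⁺ ⊓ P z⁻ ≤ z⁺ ⊓ z⁻ :=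
            inf_le_inf (hP.2 _ hpos).2 (hP.2 _ hneg).2
        _ = 0 := posPart_inf_negPart_eq_zero z
    · exact le_inf (hP.2 _ hpos).1 (hP.2 _ hneg).1
  have habs : |P z⁺ - P z⁻| = P z⁺ + P z⁻ := by
    have h1 : (P z⁺ ⊔ P z⁻) - (P z⁺ ⊓ P z⁻) = |P z⁻ - P z⁺| :=
      sup_sub_inf_eq_abs_sub _ _
    have h2 : (P z⁺ ⊓ P z⁻) + (P z⁺ ⊔ P z⁻) = P z⁺ + P z⁻ := inf_add_sup _ _
    rw [abs_sub_comm] at h1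
    rw [hdisj, sub_zero] at h1
    rw [hdisj, zero_add] at h2
    rw [← h1, h2]
  calc P |z| = P (z⁺ + z⁻) := by rw [posPart_add_negPart z]
    _ = P z⁺ + P z⁻ := map_add _ _ _
    _ = |P z⁺ - P z⁻| := habs.symm
    _ = |P (z⁺ - z⁻)| := by rw [map_sub]
    _ = |P z| := by rw [posPart_sub_negPart z]

end Aux

/-- If `T` is an `ε`-band preserving linear map on a Banach lattice, then for every band
projection `P` and every `x` with `P x = 0`, one has `‖P (T x)‖ ≤ ε * ‖x‖`. -/
theorem epsBP_band_projection_bound {X : Type*} [NormedAddCommGroup X] [Lattice X] [HasSolidNorm X]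
    [IsOrderedAddMonoid X]
    [NormedSpace ℝ X] [CompleteSpace X] (ε : ℝ) (hε : 0 ≤ ε)
    (T : X →ₗ[ℝ] X) (hT : IsEpsBandPreserving ε ⇑T)
    (P : X →ₗ[ℝ] X) (hP : IsBandProjection P) (x : X) (hx : P x = 0) :
    ‖P (T x)‖ ≤ ε * ‖x‖ := by
  set y : X := |P (T x)| with hy
  have hy0 : (0:X) ≤ y := abs_nonneg _
  -- P |x| = |P x| = 0
  have hPabsx : P |x| = 0 := by rw [bp_abs P hP, hx, abs_zero]
  -- y is a fixed point of P
  have hPy : P y = y := by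
    rw [hy, ← bp_abs P hP, hP.1, bp_abs P hP]
  -- |x| ⊓ y = 0
  have hdisj : |x| ⊓ y = 0 := by
    set u : X := |x| ⊓ y with hu
    have hu0 : (0:X) ≤ u := le_inf (abs_nonneg _) hy0
    have hPu : P u = 0 := by
      have h1 : P u ≤ P |x| := bp_mono P hP inf_le_left
      rw [hPabsx] at h1
      exact le_antisymm h1 (hP.2 _ hu0).1
    -- u ≤ y, so u - P u ≤ y - P y = 0
    have h3 : u ≤ y := inf_le_right
    have h2 : u - P u ≤ y - P y := by
      have h4 := (hP.2 _ (sub_nonneg.2 h3)).2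
      rw [map_sub] at h4
      have h5 := sub_nonneg.2 h4
      have e : (y - u) - (P y - P u) = (y - P y) - (u - P u) := by abel
      rw [e] at h5
      exact sub_nonneg.1 h5
    rw [hPu, hPy, sub_zero, sub_self] at h2
    exact le_antisymm h2 hu0
  have hkey := hT x y hy0 hdisj
  -- y ≤ |T x|, since y = P |T x| ≤ |T x|
  have hyle : y ≤ |T x| := by
    rw [hy, ← bp_abs P hP]
    exact (hP.2 _ (abs_nonneg _)).2
  rw [inf_eq_right.2 hyle, hy, norm_abs_eq_norm] at hkey
  exact hkey
end

section
/- Let X be a σ-Dedekind complete Banach lattice, ε ≥ 0, and let T : X → X be a bounded linear operator. Then: (1) if for every band projection P on X the commutator satisfies ‖P T − T P‖ ≤ ε, then T is ε-band preserving; (2) if T is ε-band preserving, then for every band projection P on X one has ‖P T − T P‖ ≤ 2ε. -/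
/-- `X` is σ-Dedekind complete: every increasing sequence bounded above has a
least upper bound. -/
def SigmaDedekindComplete (X : Type*) [Lattice X] : Prop :=
  ∀ f : ℕ → X, Monotone f → BddAbove (Set.range f) → ∃ s, IsLUB (Set.range f) s

/-- Riesz inequality: for nonneg elements, `(a+b) ⊓ c ≤ a ⊓ c + b ⊓ c`. -/
lemma epsBP_aux_add_inf_le {X : Type*} [NormedAddCommGroup X] [Lattice X] [HasSolidNorm X] [IsOrderedAddMonoid X]
    {a b c : X} (ha : 0 ≤ a) (hb : 0 ≤ b) (hc : 0 ≤ c) :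
    (a + b) ⊓ c ≤ a ⊓ c + b ⊓ c := by
  have h : a ⊓ c + b ⊓ c = ((a + b) ⊓ (a + c)) ⊓ ((c + b) ⊓ (c + c)) := by
    rw [add_inf, inf_add, inf_add]; ac_rfl
  rw [h]
  refine le_inf (le_inf inf_le_left ?_) (le_inf ?_ ?_)
  · exact le_trans inf_le_right (le_add_of_nonneg_left ha)
  · exact le_trans inf_le_right (le_add_of_nonneg_right hb)
  · exact le_trans inf_le_right (le_add_of_nonneg_right hc)

lemma epsBP_aux_posPart_le_abs {X : Type*} [NormedAddCommGroup X] [Lattice X] [HasSolidNorm X] [IsOrderedAddMonoid X] (a : X) :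
    a⁺ ≤ |a| := by
  rw [← posPart_add_negPart a]; exact le_add_of_nonneg_right (negPart_nonneg a)

lemma epsBP_aux_negPart_le_abs {X : Type*} [NormedAddCommGroup X] [Lattice X] [HasSolidNorm X] [IsOrderedAddMonoid X] (a : X) :
    a⁻ ≤ |a| := by
  rw [← posPart_add_negPart a]; exact le_add_of_nonneg_left (posPart_nonneg a)

lemma epsBP_aux_abs_sub_le {X : Type*} [NormedAddCommGroup X] [Lattice X] [HasSolidNorm X] [IsOrderedAddMonoid X] (a b : X) :
    |a - b| ≤ |a| + |b| := by
  rw [sub_eq_add_neg]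
  exact (abs_add_le a (-b)).trans (by rw [abs_neg])

/-- For nonneg disjoint `a b`, `|a - b| = a + b`. -/
lemma epsBP_aux_abs_sub_of_disjoint {X : Type*} [NormedAddCommGroup X] [Lattice X] [HasSolidNorm X] [IsOrderedAddMonoid X]
    {a b : X} (ha : 0 ≤ a) (hb : 0 ≤ b) (hab : a ⊓ b = 0) :
    |a - b| = a + b := by
  have h1 : a ⊔ b - a ⊓ b = |b - a| := sup_sub_inf_eq_abs_sub a b
  have h2 : a ⊓ b + a ⊔ b = a + b := inf_add_sup a b
  rw [hab, sub_zero] at h1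
  rw [hab, zero_add] at h2
  rw [abs_sub_comm, ← h1, h2]

/-- On a σ-Dedekind complete Banach lattice: (1) if every band projection `P` satisfies
`‖P T − T P‖ ≤ ε`, then `T` is `ε`-band preserving; (2) if `T` is `ε`-band preserving, then
every band projection `P` satisfies `‖P T − T P‖ ≤ 2 ε`. -/
theorem epsBP_commutator {X : Type*} [NormedAddCommGroup X] [Lattice X] [HasSolidNorm X]
    [IsOrderedAddMonoid X]
    [NormedSpace ℝ X] [CompleteSpace X] (hσ : SigmaDedekindComplete X)
    (ε : ℝ) (hε : 0 ≤ ε) (T : X →L[ℝ] X) :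
    ((∀ P : X →ₗ[ℝ] X, IsBandProjection P → ∀ x : X, ‖P (T x) - T (P x)‖ ≤ ε * ‖x‖) →
      IsEpsBandPreserving ε ⇑T) ∧
    (IsEpsBandPreserving ε ⇑T →
      ∀ P : X →ₗ[ℝ] X, IsBandProjection P → ∀ x : X, ‖P (T x) - T (P x)‖ ≤ 2 * ε * ‖x‖) := by
  constructor
  · -- Part 1
    intro hcomm x y hy hdisj
    -- the principal band projection associated to y
    have hmono : ∀ z : X, Monotone (fun n : ℕ => z ⊓ n • y) := by
      intro z n m hnm
      exact inf_le_inf_left z (nsmul_le_nsmul_left hy hnm)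
    have hbdd : ∀ z : X, BddAbove (Set.range (fun n : ℕ => z ⊓ n • y)) := by
      intro z
      exact ⟨z, by rintro _ ⟨n, rfl⟩; exact inf_le_left⟩
    set q : X → X := fun z => (hσ _ (hmono z) (hbdd z)).choose with hqdef
    have hq : ∀ z : X, IsLUB (Set.range (fun n : ℕ => z ⊓ n • y)) (q z) :=
      fun z => (hσ _ (hmono z) (hbdd z)).choose_spec
    have hmem : ∀ (z : X) (n : ℕ), z ⊓ n • y ≤ q z := by
      intro z n; exact (hq z).1 ⟨n, rfl⟩
    have hq_le : ∀ z : X, q z ≤ z := by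
      intro z; exact (hq z).2 (by rintro _ ⟨n, rfl⟩; exact inf_le_left)
    have hq_nonneg : ∀ z : X, 0 ≤ z → 0 ≤ q z := by
      intro z hz
      have h0 : z ⊓ (0 : ℕ) • y = 0 := by
        rw [zero_smul]; exact inf_eq_right.mpr hz
      calc (0 : X) = z ⊓ (0 : ℕ) • y := h0.symm
        _ ≤ q z := hmem z 0
    -- q of something disjoint from y is 0
    have hq_zero_of : ∀ z : X, 0 ≤ z → z ⊓ y = 0 → q z = 0 := by
      intro z hz hzy
      have hall : ∀ n : ℕ, z ⊓ n • y = 0 := by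
        intro n
        induction n with
        | zero => rw [zero_smul]; exact inf_eq_right.mpr hz
        | succ k ih =>
          have h1 : z ⊓ (k + 1) • y = (k • y + y) ⊓ z := by
            rw [succ_nsmul, inf_comm]
          have h2 : (k • y + y) ⊓ z ≤ k • y ⊓ z + y ⊓ z :=
            epsBP_aux_add_inf_le (nsmul_nonneg hy k) hy hz
          have h3 : k • y ⊓ z + y ⊓ z = 0 := by
            rw [inf_comm (k • y) z, inf_comm y z, ih, hzy, add_zero]
          have hle : z ⊓ (k + 1) • y ≤ 0 := by rw [h1]; exact h2.trans_eq h3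
          have hge : 0 ≤ z ⊓ (k + 1) • y := le_inf hz (nsmul_nonneg hy _)
          exact le_antisymm hle hge
      have hconst : (fun n : ℕ => z ⊓ n • y) = fun _ : ℕ => (0 : X) := funext hall
      have h := hq z
      rw [hconst, Set.range_const] at h
      exact h.unique isLUB_singleton
    -- additivity on nonneg elements
    have hq_add : ∀ z₁ z₂ : X, 0 ≤ z₁ → 0 ≤ z₂ → q (z₁ + z₂) = q z₁ + q z₂ := by
      intro z₁ z₂ h₁ h₂
      refine le_antisymm ?_ ?_
      · refine (hq (z₁ + z₂)).2 ?_
        rintro _ ⟨n, rfl⟩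
        calc (z₁ + z₂) ⊓ n • y ≤ z₁ ⊓ n • y + z₂ ⊓ n • y :=
              epsBP_aux_add_inf_le h₁ h₂ (nsmul_nonneg hy n)
          _ ≤ q z₁ + q z₂ := add_le_add (hmem z₁ n) (hmem z₂ n)
      · have key : ∀ n m : ℕ, z₁ ⊓ n • y + z₂ ⊓ m • y ≤ q (z₁ + z₂) := by
          intro n m
          have h1 : z₁ ⊓ n • y + z₂ ⊓ m • y ≤ (z₁ + z₂) ⊓ (n + m) • y := by
            refine le_inf (add_le_add inf_le_left inf_le_left) ?_
            rw [add_nsmul]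
            exact add_le_add inf_le_right inf_le_right
          exact h1.trans (hmem _ (n + m))
        have step1 : ∀ m : ℕ, q z₁ + z₂ ⊓ m • y ≤ q (z₁ + z₂) := by
          intro m
          have h5 : q z₁ ≤ q (z₁ + z₂) - z₂ ⊓ m • y := by
            refine (hq z₁).2 ?_
            rintro _ ⟨n, rfl⟩
            exact le_sub_iff_add_le.mpr (key n m)
          exact le_sub_iff_add_le.mp h5
        have h6 : q z₂ ≤ q (z₁ + z₂) - q z₁ := by
          refine (hq z₂).2 ?_
          rintro _ ⟨m, rfl⟩
          exact le_sub_iff_add_le.mpr (by rw [add_comm]; exact step1 m)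
        rw [add_comm]
        exact le_sub_iff_add_le.mp h6
    -- idempotence on nonneg elements
    have hq_idem : ∀ z : X, 0 ≤ z → q (q z) = q z := by
      intro z hz
      have hlub : IsLUB (Set.range (fun n : ℕ => q z ⊓ n • y)) (q z) := by
        constructor
        · rintro _ ⟨n, rfl⟩; exact inf_le_left
        · intro t ht
          refine (hq z).2 ?_
          rintro _ ⟨n, rfl⟩
          have h7 : z ⊓ n • y ≤ q z ⊓ n • y :=
            le_inf (hmem z n) inf_le_right
          exact h7.trans (ht ⟨n, rfl⟩)
      exact (hq (q z)).unique hlub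
    -- (z - q z) is disjoint from y, for z ≥ 0
    have hq_perp : ∀ z : X, 0 ≤ z → (z - q z) ⊓ y = 0 := by
      intro z hz
      set w := (z - q z) ⊓ y with hwdef
      have hw0 : 0 ≤ w := le_inf (sub_nonneg.mpr (hq_le z)) hy
      have hn : ∀ n : ℕ, n • w ≤ z ⊓ n • y := by
        intro n
        induction n with
        | zero => rw [zero_smul, zero_smul]; exact le_inf hz le_rfl
        | succ k ih =>
          rw [succ_nsmul, succ_nsmul]
          refine le_inf ?_ (add_le_add (inf_le_right.trans' ih) inf_le_right)
          · have h1 : k • w ≤ z ⊓ k • y := ih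
            have h2 : w ≤ z - q z := inf_le_left
            have h3 : z ⊓ k • y ≤ q z := hmem z k
            calc k • w + w ≤ q z + (z - q z) :=
                  add_le_add (h1.trans h3) h2
              _ = z := by abel
      have hwz : ∀ n : ℕ, n • w ≤ z := fun n => (hn n).trans inf_le_left
      have hnorm : ∀ n : ℕ, (n : ℝ) * ‖w‖ ≤ ‖z‖ := by
        intro n
        have h1 : |n • w| ≤ |z| := by
          rw [abs_of_nonneg (nsmul_nonneg hw0 n), abs_of_nonneg hz]
          exact hwz n
        have h2 : ‖n • w‖ ≤ ‖z‖ := norm_le_norm_of_abs_le_abs h1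
        rw [← Nat.cast_smul_eq_nsmul ℝ n w, norm_smul] at h2
        simpa using h2
      have hwnorm : ‖w‖ = 0 := by
        by_contra hne
        have hpos : 0 < ‖w‖ := lt_of_le_of_ne (norm_nonneg w) (Ne.symm hne)
        obtain ⟨n, hn'⟩ := exists_nat_gt (‖z‖ / ‖w‖)
        have h8 := hnorm n
        rw [div_lt_iff₀ hpos] at hn'
        linarith
      exact norm_eq_zero.mp hwnorm
    -- the extension to all of X
    set p : X → X := fun w => q (w⁺) - q (w⁻) with hpdef
    have hp_rep : ∀ u v : X, 0 ≤ u → 0 ≤ v → p (u - v) = q u - q v := by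
      intro u v hu hv
      set a := u - v with hadef
      have hkey : a⁺ + v = a⁻ + u := by
        have h := posPart_sub_negPart a
        rw [hadef] at h
        have h9 := sub_eq_sub_iff_add_eq_add.mp h
        rw [add_comm u (a⁻)] at h9
        exact h9
      have h2 : q (a⁺) + q v = q (a⁻) + q u := by
        rw [← hq_add _ _ (posPart_nonneg a) hv, ← hq_add _ _ (negPart_nonneg a) hu, hkey]
      show q (a⁺) - q (a⁻) = q u - q v
      exact sub_eq_sub_iff_add_eq_add.mpr (h2.trans (add_comm _ _))
    have hp_pos : ∀ w : X, 0 ≤ w → p w = q w := by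
      intro w hw
      have h1 : w⁺ = w := posPart_eq_self.mpr hw
      have h2 : w⁻ = 0 := negPart_eq_zero.mpr hw
      have h3 : q 0 = 0 := hq_zero_of 0 le_rfl (inf_eq_left.mpr hy)
      simp only [hpdef, h1, h2, h3, sub_zero]
    have hp_add : ∀ a b : X, p (a + b) = p a + p b := by
      intro a b
      have h1 : a + b = (a⁺ + b⁺) - (a⁻ + b⁻) := by
        rw [← sub_add_sub_comm, posPart_sub_negPart, posPart_sub_negPart]
      have h2 : p (a + b) = q (a⁺ + b⁺) - q (a⁻ + b⁻) := by
        rw [h1]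
        exact hp_rep _ _ (add_nonneg (posPart_nonneg a) (posPart_nonneg b))
          (add_nonneg (negPart_nonneg a) (negPart_nonneg b))
      rw [h2, hq_add _ _ (posPart_nonneg a) (posPart_nonneg b),
        hq_add _ _ (negPart_nonneg a) (negPart_nonneg b)]
      show _ = (q (a⁺) - q (a⁻)) + (q (b⁺) - q (b⁻))
      abel
    -- p is 1-Lipschitz, hence continuous
    have hp_abs_le : ∀ w : X, |p w| ≤ |w| := by
      intro w
      have h1 : |q (w⁺) - q (w⁻)| ≤ q (w⁺) + q (w⁻) := by
        refine (epsBP_aux_abs_sub_le _ _).trans ?_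
        rw [abs_of_nonneg (hq_nonneg _ (posPart_nonneg w)),
          abs_of_nonneg (hq_nonneg _ (negPart_nonneg w))]
      calc |p w| = |q (w⁺) - q (w⁻)| := rfl
        _ ≤ q (w⁺) + q (w⁻) := h1
        _ ≤ w⁺ + w⁻ := add_le_add (hq_le _) (hq_le _)
        _ = |w| := posPart_add_negPart w
    have hp_cont : Continuous p := by
      have hlip : LipschitzWith 1 p := by
        refine LipschitzWith.of_dist_le_mul ?_
        intro a b
        rw [dist_eq_norm, dist_eq_norm, NNReal.coe_one, one_mul]
        have hpab : p a - p b = p (a - b) := by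
          have h10 := hp_add (a - b) b
          rw [sub_add_cancel] at h10
          rw [h10]; abel
        rw [hpab]
        exact norm_le_norm_of_abs_le_abs (hp_abs_le (a - b))
      exact hlip.continuous
    -- the band projection P := id - p
    set F : X →+ X := AddMonoidHom.mk' p hp_add with hFdef
    set Q : X →L[ℝ] X := F.toRealLinearMap hp_cont with hQdef
    set P : X →ₗ[ℝ] X := LinearMap.id - (Q : X →ₗ[ℝ] X) with hPdef
    have hPapp : ∀ w : X, P w = w - p w := fun w => rfl
    have hp_idem : ∀ w : X, p (p w) = p w := by
      intro w
      have h1 : p (p w) = q (q (w⁺)) - q (q (w⁻)) :=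
        hp_rep _ _ (hq_nonneg _ (posPart_nonneg w)) (hq_nonneg _ (negPart_nonneg w))
      rw [h1, hq_idem _ (posPart_nonneg w), hq_idem _ (negPart_nonneg w)]
    have hPband : IsBandProjection P := by
      constructor
      · intro w
        have h11 := hp_add (w - p w) (p w)
        rw [sub_add_cancel] at h11
        have h12 : p (w - p w) = p w - p (p w) := eq_sub_of_add_eq h11.symm
        show (w - p w) - p (w - p w) = w - p w
        rw [h12, hp_idem]
        abel
      · intro w hw
        rw [hPapp, hp_pos w hw]
        exact ⟨sub_nonneg.mpr (hq_le w), sub_le_self _ (hq_nonneg w hw)⟩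
    have hcx := hcomm P hPband x
    -- P x = x
    have hpx : p x = 0 := by
      have h1 : q (x⁺) = 0 := by
        refine hq_zero_of _ (posPart_nonneg x) ?_
        have hle : x⁺ ⊓ y ≤ |x| ⊓ y := inf_le_inf_right y (epsBP_aux_posPart_le_abs x)
        have hge : 0 ≤ x⁺ ⊓ y := le_inf (posPart_nonneg x) hy
        exact le_antisymm (hle.trans_eq hdisj) hge
      have h2 : q (x⁻) = 0 := by
        refine hq_zero_of _ (negPart_nonneg x) ?_
        have hle : x⁻ ⊓ y ≤ |x| ⊓ y := inf_le_inf_right y (epsBP_aux_negPart_le_abs x)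
        have hge : 0 ≤ x⁻ ⊓ y := le_inf (negPart_nonneg x) hy
        exact le_antisymm (hle.trans_eq hdisj) hge
      simp only [hpdef, h1, h2, sub_zero]
    have hPx : P x = x := by rw [hPapp, hpx, sub_zero]
    rw [hPx] at hcx
    have hnormp : ‖p (T x)‖ ≤ ε * ‖x‖ := by
      have h13 : P (T x) - T x = -(p (T x)) := by rw [hPapp]; abel
      rw [h13, norm_neg] at hcx
      exact hcx
    -- final chain
    set w : X := T x with hwdef
    have hqdisj : q (w⁺) ⊓ q (w⁻) = 0 := by
      have h1 : q (w⁺) ⊓ q (w⁻) ≤ w⁺ ⊓ w⁻ := inf_le_inf (hq_le _) (hq_le _)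
      have h2 : 0 ≤ q (w⁺) ⊓ q (w⁻) :=
        le_inf (hq_nonneg _ (posPart_nonneg w)) (hq_nonneg _ (negPart_nonneg w))
      rw [posPart_inf_negPart_eq_zero] at h1
      exact le_antisymm h1 h2
    have habs_pw : |p w| = q (w⁺) + q (w⁻) :=
      epsBP_aux_abs_sub_of_disjoint (hq_nonneg _ (posPart_nonneg w))
        (hq_nonneg _ (negPart_nonneg w)) hqdisj
    have hchain : |w| ⊓ y ≤ |p w| := by
      have hsplit : |w| = (q (w⁺) + q (w⁻)) + ((w⁺ - q (w⁺)) + (w⁻ - q (w⁻))) := by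
        have h14 := posPart_add_negPart w
        rw [← h14]; abel
      have hA : 0 ≤ q (w⁺) + q (w⁻) :=
        add_nonneg (hq_nonneg _ (posPart_nonneg w)) (hq_nonneg _ (negPart_nonneg w))
      have hB1 : 0 ≤ w⁺ - q (w⁺) := sub_nonneg.mpr (hq_le _)
      have hB2 : 0 ≤ w⁻ - q (w⁻) := sub_nonneg.mpr (hq_le _)
      calc |w| ⊓ y ≤ (q (w⁺) + q (w⁻)) ⊓ y + ((w⁺ - q (w⁺)) + (w⁻ - q (w⁻))) ⊓ y := by
            rw [hsplit]
            exact epsBP_aux_add_inf_le hA (add_nonneg hB1 hB2) hy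
        _ ≤ (q (w⁺) + q (w⁻)) + ((w⁺ - q (w⁺)) ⊓ y + (w⁻ - q (w⁻)) ⊓ y) := by
            refine add_le_add inf_le_left ?_
            exact epsBP_aux_add_inf_le hB1 hB2 hy
        _ = q (w⁺) + q (w⁻) := by
            rw [hq_perp _ (posPart_nonneg w), hq_perp _ (negPart_nonneg w), add_zero, add_zero]
        _ = |p w| := habs_pw.symm
    have hfinal : ‖|w| ⊓ y‖ ≤ ‖p w‖ := by
      refine norm_le_norm_of_abs_le_abs ?_
      have h0 : 0 ≤ |w| ⊓ y := le_inf (abs_nonneg w) hy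
      calc |(|w| ⊓ y)| = |w| ⊓ y := abs_of_nonneg h0
        _ ≤ |p w| := hchain
    exact hfinal.trans hnormp
  · -- Part 2
    intro hT P hP x
    obtain ⟨hP2, hPpos⟩ := hP
    have hPmono : ∀ a b : X, a ≤ b → P a ≤ P b := by
      intro a b h
      have h1 := (hPpos _ (sub_nonneg.mpr h)).1
      rw [map_sub] at h1
      exact sub_nonneg.mp h1
    have hPdecomp : ∀ w : X, P w = P (w⁺) - P (w⁻) := by
      intro w
      conv_lhs => rw [← posPart_sub_negPart w]
      rw [map_sub]
    have habsP : ∀ w : X, |P w| ≤ P |w| := by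
      intro w
      rw [hPdecomp w, ← posPart_add_negPart w, map_add]
      refine (epsBP_aux_abs_sub_le _ _).trans ?_
      rw [abs_of_nonneg (hPpos _ (posPart_nonneg w)).1,
        abs_of_nonneg (hPpos _ (negPart_nonneg w)).1]
    have habsQ : ∀ w : X, |w - P w| ≤ |w| - P |w| := by
      intro w
      have hrw : w - P w = (w⁺ - P (w⁺)) - (w⁻ - P (w⁻)) := by
        have hx1 : (w⁺ - P (w⁺)) - (w⁻ - P (w⁻)) = (w⁺ - w⁻) - (P (w⁺) - P (w⁻)) := by
          abel
        rw [hx1, posPart_sub_negPart, ← hPdecomp w]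
      rw [hrw]
      refine (epsBP_aux_abs_sub_le _ _).trans ?_
      rw [abs_of_nonneg (sub_nonneg.mpr (hPpos _ (posPart_nonneg w)).2),
        abs_of_nonneg (sub_nonneg.mpr (hPpos _ (negPart_nonneg w)).2),
        ← posPart_add_negPart w, map_add]
      exact le_of_eq (by abel)
    -- key disjointness
    have hdisjPQ : ∀ u v : X, 0 ≤ u → 0 ≤ v → P u ⊓ (v - P v) = 0 := by
      have hself : ∀ u : X, 0 ≤ u → P u ⊓ (u - P u) = 0 := by
        intro u hu
        set w := P u ⊓ (u - P u) with hwdef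
        have hw0 : 0 ≤ w := le_inf (hPpos u hu).1 (sub_nonneg.mpr (hPpos u hu).2)
        have hPw : P w ≤ 0 := by
          have h1 : P w ≤ P (u - P u) := hPmono _ _ inf_le_right
          rw [map_sub, hP2] at h1
          simpa using h1
        have hQw : w - P w ≤ 0 := by
          have h1 : w ≤ P u := inf_le_left
          have h3 := (hPpos _ (sub_nonneg.mpr h1)).2
          rw [map_sub] at h3
          -- h3 : P (P u) - P w ≤ P u - w
          have h4 : w - P w ≤ P u - P (P u) :=
            sub_le_sub_iff.mpr ((add_comm w (P (P u))).trans_le (sub_le_sub_iff.mp h3))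
          rw [hP2] at h4
          simpa using h4
        have hle : w ≤ 0 := by
          have hsum : w = P w + (w - P w) := by abel
          rw [hsum]
          exact add_nonpos hPw hQw
        exact le_antisymm hle hw0
      intro u v hu hv
      have h1 : P u ⊓ (v - P v) ≤ P (u + v) ⊓ ((u + v) - P (u + v)) := by
        refine inf_le_inf ?_ ?_
        · rw [map_add]
          exact le_add_of_nonneg_right (hPpos v hv).1
        · rw [map_add]
          calc v - P v ≤ (v - P v) + (u - P u) :=
                le_add_of_nonneg_right (sub_nonneg.mpr (hPpos u hu).2)
            _ = u + v - (P u + P v) := by abel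
      rw [hself (u + v) (add_nonneg hu hv)] at h1
      have h2 : 0 ≤ P u ⊓ (v - P v) :=
        le_inf (hPpos u hu).1 (sub_nonneg.mpr (hPpos v hv).2)
      exact le_antisymm h1 h2
    have hnormP : ∀ w : X, ‖P w‖ ≤ ‖w‖ := by
      intro w
      refine norm_le_norm_of_abs_le_abs ((habsP w).trans ?_)
      exact (hPpos _ (abs_nonneg w)).2
    have hnormQ : ∀ w : X, ‖w - P w‖ ≤ ‖w‖ := by
      intro w
      refine norm_le_norm_of_abs_le_abs ((habsQ w).trans ?_)
      exact sub_le_self _ (hPpos _ (abs_nonneg w)).1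
    have htermA : ‖P (T (x - P x))‖ ≤ ε * ‖x‖ := by
      set z := x - P x with hzdef
      set w : X := T z with hwdef
      have hyy : (0:X) ≤ P |w| := (hPpos _ (abs_nonneg w)).1
      have hzdisj : |z| ⊓ P |w| = 0 := by
        have h1 : |z| ≤ |x| - P |x| := habsQ x
        have h2 : |z| ⊓ P |w| ≤ (|x| - P |x|) ⊓ P |w| :=
          inf_le_inf_right _ h1
        rw [inf_comm (|x| - P |x|) (P |w|)] at h2
        rw [hdisjPQ |w| |x| (abs_nonneg w) (abs_nonneg x)] at h2
        exact le_antisymm h2 (le_inf (abs_nonneg z) hyy)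
      have hbp := hT z (P |w|) hyy hzdisj
      have hinf : |T z| ⊓ P |w| = P |w| :=
        inf_eq_right.mpr (hPpos _ (abs_nonneg w)).2
      rw [hinf] at hbp
      have h3 : ‖P w‖ ≤ ‖P |w|‖ := by
        refine norm_le_norm_of_abs_le_abs ?_
        rw [abs_of_nonneg hyy]
        exact habsP w
      have h4 : ‖z‖ ≤ ‖x‖ := hnormQ x
      calc ‖P w‖ ≤ ‖P |w|‖ := h3
        _ ≤ ε * ‖z‖ := hbp
        _ ≤ ε * ‖x‖ := mul_le_mul_of_nonneg_left h4 hε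
    have htermB : ‖T (P x) - P (T (P x))‖ ≤ ε * ‖x‖ := by
      set z := P x with hzdef
      set w : X := T z with hwdef
      have hyy : (0:X) ≤ |w| - P |w| := sub_nonneg.mpr (hPpos _ (abs_nonneg w)).2
      have hzdisj : |z| ⊓ (|w| - P |w|) = 0 := by
        have h1 : |z| ≤ P |x| := habsP x
        have h2 : |z| ⊓ (|w| - P |w|) ≤ P |x| ⊓ (|w| - P |w|) :=
          inf_le_inf_right _ h1
        rw [hdisjPQ |x| |w| (abs_nonneg x) (abs_nonneg w)] at h2
        exact le_antisymm h2 (le_inf (abs_nonneg z) hyy)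
      have hbp := hT z (|w| - P |w|) hyy hzdisj
      have hinf : |T z| ⊓ (|w| - P |w|) = |w| - P |w| :=
        inf_eq_right.mpr (sub_le_self _ (hPpos _ (abs_nonneg w)).1)
      rw [hinf] at hbp
      have h3 : ‖w - P w‖ ≤ ‖|w| - P |w|‖ := by
        refine norm_le_norm_of_abs_le_abs ?_
        rw [abs_of_nonneg hyy]
        exact habsQ w
      have h4 : ‖z‖ ≤ ‖x‖ := hnormP x
      calc ‖w - P w‖ ≤ ‖|w| - P |w|‖ := h3
        _ ≤ ε * ‖z‖ := hbp
        _ ≤ ε * ‖x‖ := mul_le_mul_of_nonneg_left h4 hε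
    have hsplit : P (T x) - T (P x) =
        P (T (x - P x)) - (T (P x) - P (T (P x))) := by
      rw [map_sub, map_sub]
      abel
    rw [hsplit]
    calc ‖P (T (x - P x)) - (T (P x) - P (T (P x)))‖
        ≤ ‖P (T (x - P x))‖ + ‖T (P x) - P (T (P x))‖ := norm_sub_le _ _
      _ ≤ ε * ‖x‖ + ε * ‖x‖ := add_le_add htermA htermB
      _ = 2 * ε * ‖x‖ := by ring
end

section
/- Let X be a Banach lattice, ε ≥ 0, and let T : X → X be a linear map with the following property: for every x ∈ X with ‖x‖ ≤ 1 and every ε' > ε, there exist λ > 0 and z ∈ X with ‖z‖ ≤ ε' such that |T x| ≤ λ·|x| + z. Then T is ε-band preserving. -/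
section Aux

variable {X : Type*} [NormedAddCommGroup X] [Lattice X] [HasSolidNorm X] [IsOrderedAddMonoid X]
    [NormedSpace ℝ X]

/-- Nonnegativity is preserved by scaling by `(2^n)⁻¹`. -/
lemma aux_inv_pow_two_smul_nonneg (n : ℕ) {a : X} (ha : 0 ≤ a) :
    0 ≤ ((2 : ℝ) ^ n)⁻¹ • a := by
  induction n with
  | zero => simpa using ha
  | succ n ih =>
      apply nsmul_two_semiclosed
      have : (2 : ℕ) • (((2 : ℝ) ^ (n + 1))⁻¹ • a) = ((2 : ℝ) ^ n)⁻¹ • a := by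
        rw [← Nat.cast_smul_eq_nsmul ℝ, smul_smul]
        norm_num [pow_succ]
        ring_nf
      rw [this]
      exact ih

/-- Nonnegativity is preserved by real nonneg scalars (via dyadic approximation and
closedness of the positive cone). -/
lemma aux_smul_nonneg {r : ℝ} (hr : 0 ≤ r) {a : X} (ha : 0 ≤ a) : 0 ≤ r • a := by
  set q : ℕ → ℝ := fun n => (⌈r * 2 ^ n⌉ : ℝ) / 2 ^ n with hq
  have hq_nonneg : ∀ n, 0 ≤ (⌈r * 2 ^ n⌉ : ℤ) := fun n =>
    Int.ceil_nonneg (by positivity)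
  have hmem : ∀ n, 0 ≤ q n • a := by
    intro n
    have : q n • a = (⌈r * 2 ^ n⌉ : ℤ) • (((2 : ℝ) ^ n)⁻¹ • a) := by
      rw [← Int.cast_smul_eq_zsmul ℝ, smul_smul, hq]
      ring_nf
    rw [this]
    exact zsmul_nonneg (aux_inv_pow_two_smul_nonneg n ha) (hq_nonneg n)
  have hql : ∀ n, r ≤ q n := fun n => by
    rw [hq, le_div_iff₀ (by positivity)]
    exact Int.le_ceil _
  have hqu : ∀ n, q n ≤ r + ((2 : ℝ) ^ n)⁻¹ := fun n => by
    rw [hq, div_le_iff₀ (by positivity), add_mul, inv_mul_cancel₀ (by positivity)]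
    exact (Int.ceil_lt_add_one _).le
  have hq_tendsto : Filter.Tendsto q Filter.atTop (nhds r) := by
    have h1 : Filter.Tendsto (fun n : ℕ => r + ((2 : ℝ) ^ n)⁻¹) Filter.atTop (nhds (r + 0)) :=
      Filter.Tendsto.const_add _ (tendsto_inv_atTop_zero.comp
        (tendsto_pow_atTop_atTop_of_one_lt one_lt_two))
    rw [add_zero] at h1
    exact tendsto_of_tendsto_of_tendsto_of_le_of_le tendsto_const_nhds h1 hql hqu
  have htend : Filter.Tendsto (fun n => q n • a) Filter.atTop (nhds (r • a)) :=
    hq_tendsto.smul_const a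
  exact isClosed_nonneg.mem_of_tendsto htend (Filter.Eventually.of_forall hmem)

lemma aux_smul_mono {r : ℝ} (hr : 0 ≤ r) {a b : X} (hab : a ≤ b) : r • a ≤ r • b := by
  have := aux_smul_nonneg hr (sub_nonneg.2 hab)
  rw [smul_sub] at this
  exact sub_nonneg.1 this

end Aux

section Aux2

variable {X : Type*} [NormedAddCommGroup X] [Lattice X] [HasSolidNorm X] [IsOrderedAddMonoid X]
    [NormedSpace ℝ X]

lemma aux_smul_inf {r : ℝ} (hr : 0 < r) (a b : X) : r • (a ⊓ b) = r • a ⊓ r • b := by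
  apply le_antisymm
  · exact le_inf (aux_smul_mono hr.le inf_le_left) (aux_smul_mono hr.le inf_le_right)
  · have key : r⁻¹ • (r • a ⊓ r • b) ≤ a ⊓ b := by
      apply le_inf
      · have := aux_smul_mono (inv_nonneg.2 hr.le) (inf_le_left (a := r • a) (b := r • b))
        rwa [smul_smul, inv_mul_cancel₀ hr.ne', one_smul] at this
      · have := aux_smul_mono (inv_nonneg.2 hr.le) (inf_le_right (a := r • a) (b := r • b))
        rwa [smul_smul, inv_mul_cancel₀ hr.ne', one_smul] at this
    have := aux_smul_mono hr.le key
    rwa [smul_smul, mul_inv_cancel₀ hr.ne', one_smul] at this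

lemma aux_disjoint_smul {r : ℝ} (hr : 0 ≤ r) {a y : X} (ha : 0 ≤ a) (hy : 0 ≤ y)
    (hd : a ⊓ y = 0) : (r • a) ⊓ y = 0 := by
  set μ := max r 1 with hμ
  have hμ1 : (1 : ℝ) ≤ μ := le_max_right _ _
  have hμ0 : 0 < μ := lt_of_lt_of_le one_pos hμ1
  apply le_antisymm
  · have h1 : r • a ≤ μ • a := by
      have := aux_smul_nonneg (sub_nonneg.2 (le_max_left r 1)) ha
      rw [sub_smul] at this
      exact sub_nonneg.1 this
    have h2 : y ≤ μ • y := by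
      have := aux_smul_nonneg (sub_nonneg.2 hμ1) hy
      rw [sub_smul, one_smul] at this
      exact sub_nonneg.1 this
    calc (r • a) ⊓ y ≤ (μ • a) ⊓ (μ • y) :=
          inf_le_inf h1 h2
      _ = μ • (a ⊓ y) := (aux_smul_inf hμ0 a y).symm
      _ = 0 := by rw [hd, smul_zero]
  · exact le_inf (aux_smul_nonneg hr ha) hy

lemma aux_inf_add_le {a b c : X} (ha : 0 ≤ a) (hb : 0 ≤ b) (hc : 0 ≤ c) :
    (a + b) ⊓ c ≤ a ⊓ c + b ⊓ c := by
  have step1 : (a + b) ⊓ c ≤ a ⊓ c + b := by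
    have : a ⊓ c + b = (a + b) ⊓ (c + b) := inf_add a c b
    rw [this]
    exact inf_le_inf_left _ (le_add_of_nonneg_right hb)
  have step2 : (a ⊓ c + b) ⊓ c ≤ a ⊓ c + b ⊓ c := by
    have h1 : a ⊓ c + b ⊓ c = (a ⊓ c + b) ⊓ (a ⊓ c + c) := add_inf b c (a ⊓ c)
    rw [h1]
    exact inf_le_inf_left _ (le_add_of_nonneg_left (le_inf ha hc))
  exact le_trans (le_inf step1 inf_le_right) step2

end Aux2

/-- If a linear map `T` on a Banach lattice satisfies: for every `x` in the unit ball and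
every `ε' > ε` there exist `λ > 0` and `z` with `‖z‖ ≤ ε'` such that `|T x| ≤ λ|x| + z`,
then `T` is `ε`-band preserving. -/
theorem epsBP_of_domination {X : Type*} [NormedAddCommGroup X] [Lattice X]
    [HasSolidNorm X] [IsOrderedAddMonoid X]
    [NormedSpace ℝ X] [CompleteSpace X] (ε : ℝ) (hε : 0 ≤ ε) (T : X →ₗ[ℝ] X)
    (h : ∀ x : X, ‖x‖ ≤ 1 → ∀ ε' : ℝ, ε < ε' →
      ∃ lam : ℝ, 0 < lam ∧ ∃ z : X, ‖z‖ ≤ ε' ∧ |T x| ≤ lam • |x| + z) :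
    IsEpsBandPreserving ε ⇑T := by
  intro x y hy hxy
  by_cases hx : x = 0
  · subst hx
    rw [map_zero, abs_zero, inf_eq_left.2 hy, norm_zero, mul_zero]
  · have hx0 : 0 < ‖x‖ := norm_pos_iff.2 hx
    have key : ∀ ε' : ℝ, ε < ε' → ‖|T x| ⊓ y‖ ≤ ε' * ‖x‖ := by
      intro ε' hε'
      set u := ‖x‖⁻¹ • x with hu_def
      have hu : ‖u‖ ≤ 1 := by
        rw [hu_def, norm_smul, norm_inv, norm_norm, inv_mul_cancel₀ hx0.ne']
      obtain ⟨lam, hlam, z, hz, hdom⟩ := h u hu ε' hε'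
      have hxu : ‖x‖ • u = x := by
        rw [hu_def, smul_smul, mul_inv_cancel₀ hx0.ne', one_smul]
      have hTx : T x = ‖x‖ • T u := by rw [← T.map_smul, hxu]
      have habs : |T x| ≤ ‖x‖ • |T u| := by
        rw [hTx]
        refine abs_le'.2 ⟨aux_smul_mono (norm_nonneg x) (le_abs_self _), ?_⟩
        rw [← smul_neg]
        exact aux_smul_mono (norm_nonneg x) (neg_le_abs _)
      have hu_abs : ‖x‖ • |u| ≤ |x| := by
        have h1 : |u| ≤ ‖x‖⁻¹ • |x| := by
          rw [hu_def]
          refine abs_le'.2 ⟨aux_smul_mono (by positivity) (le_abs_self _), ?_⟩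
          rw [← smul_neg]
          exact aux_smul_mono (by positivity) (neg_le_abs _)
        have := aux_smul_mono (norm_nonneg x) h1
        rwa [smul_smul, mul_inv_cancel₀ hx0.ne', one_smul] at this
      have hsum : ‖x‖ • |T u| ≤ lam • |x| + ‖x‖ • |z| := by
        calc ‖x‖ • |T u| ≤ ‖x‖ • (lam • |u| + z) := aux_smul_mono (norm_nonneg x) hdom
          _ = lam • (‖x‖ • |u|) + ‖x‖ • z := by
              rw [smul_add, smul_smul, smul_smul, mul_comm]
          _ ≤ lam • |x| + ‖x‖ • |z| :=
              add_le_add (aux_smul_mono hlam.le hu_abs)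
                (aux_smul_mono (norm_nonneg x) (le_abs_self z))
      have ha : (0 : X) ≤ lam • |x| := aux_smul_nonneg hlam.le (abs_nonneg x)
      have hb : (0 : X) ≤ ‖x‖ • |z| := aux_smul_nonneg (norm_nonneg x) (abs_nonneg z)
      have hay : (lam • |x|) ⊓ y = 0 := aux_disjoint_smul hlam.le (abs_nonneg x) hy hxy
      have chain : |T x| ⊓ y ≤ ‖x‖ • |z| := by
        calc |T x| ⊓ y ≤ (lam • |x| + ‖x‖ • |z|) ⊓ y :=
              inf_le_inf_right y (habs.trans hsum)
          _ ≤ (lam • |x|) ⊓ y + (‖x‖ • |z|) ⊓ y := aux_inf_add_le ha hb hy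
          _ = (‖x‖ • |z|) ⊓ y := by rw [hay, zero_add]
          _ ≤ ‖x‖ • |z| := inf_le_left
      have hpos : (0 : X) ≤ |T x| ⊓ y := le_inf (abs_nonneg _) hy
      have hnorm : ‖|T x| ⊓ y‖ ≤ ‖‖x‖ • |z|‖ := by
        apply HasSolidNorm.solid
        rwa [abs_of_nonneg hpos, abs_of_nonneg hb]
      have : ‖(‖x‖ : ℝ) • |z|‖ = ‖x‖ * ‖z‖ := by
        rw [norm_smul, norm_norm, norm_abs_eq_norm]
      rw [this] at hnorm
      calc ‖|T x| ⊓ y‖ ≤ ‖x‖ * ‖z‖ := hnorm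
        _ ≤ ‖x‖ * ε' := by gcongr
        _ = ε' * ‖x‖ := mul_comm _ _
    refine le_of_forall_gt_imp_ge_of_dense fun c hc => ?_
    have hc' : ε < c / ‖x‖ := (lt_div_iff₀ hx0).2 hc
    have := key (c / ‖x‖) hc'
    rwa [div_mul_cancel₀ _ hx0.ne'] at this
end

section
/- Let X be a Banach lattice, ε ≥ 0, and let T : X → X be a bounded linear operator that is ε-band preserving. Then for every x ∈ X with ‖x‖ ≤ 1 and every ε' > ε, there exist λ > 0 and z ∈ X with ‖z‖ ≤ ε' such that |T x| ≤ λ·|x| + z. -/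
section Aux
variable {X : Type*} [NormedAddCommGroup X] [Lattice X] [HasSolidNorm X]
    [IsOrderedAddMonoid X]

lemma aux_add_inf_le (a b c : X) (ha : 0 ≤ a) (hb : 0 ≤ b) (hc : 0 ≤ c) :
    (a + b) ⊓ c ≤ a ⊓ c + b ⊓ c := by
  have h : a ⊓ c + b ⊓ c = ((a + b) ⊓ (a + c)) ⊓ ((c + b) ⊓ (c + c)) := by
    rw [inf_add, add_inf, add_inf]
  rw [h]
  refine le_inf (le_inf inf_le_left ?_) (le_inf ?_ ?_)
  · exact inf_le_right.trans (le_add_of_nonneg_left ha)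
  · exact inf_le_right.trans (le_add_of_nonneg_right hb)
  · exact inf_le_right.trans (le_add_of_nonneg_left hc)

lemma aux_nsmul_disjoint (a c : X) (ha : 0 ≤ a) (hc : 0 ≤ c) (h : a ⊓ c = 0) :
    ∀ n : ℕ, (n • a) ⊓ c = 0 := by
  intro n
  induction n with
  | zero => simp [inf_of_le_left hc]
  | succ k ih =>
      have h1 : ((k • a) + a) ⊓ c ≤ (k • a) ⊓ c + a ⊓ c :=
        aux_add_inf_le _ _ _ (nsmul_nonneg ha k) ha hc
      rw [ih, h, add_zero] at h1
      have h2 : 0 ≤ ((k • a) + a) ⊓ c :=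
        le_inf (add_nonneg (nsmul_nonneg ha k) ha) hc
      rw [succ_nsmul]
      exact le_antisymm h1 h2

lemma aux_pos_inf_neg (a : X) : (a ⊔ 0) ⊓ (-a ⊔ 0) = 0 := by
  simpa [posPart_def, negPart_def] using posPart_inf_negPart_eq_zero a

lemma aux_sub_inf (a b : X) : a - a ⊓ b = (a - b) ⊔ 0 := by
  rw [sub_eq_add_neg, neg_inf, add_sup]
  simp [sup_comm, sub_eq_add_neg]

lemma aux_abs_sub_le_sup (a b : X) (ha : 0 ≤ a) (hb : 0 ≤ b) : |a - b| ≤ a ⊔ b := by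
  rw [abs_le']
  refine ⟨(sub_le_self _ hb).trans le_sup_left, ?_⟩
  rw [neg_sub]
  exact (sub_le_self _ ha).trans le_sup_right

end Aux

/-- If `T` is a bounded linear operator on a Banach lattice which is `ε`-band preserving,
then for every `x` in the unit ball and every `ε' > ε` there exist `λ > 0` and `z` with
`‖z‖ ≤ ε'` such that `|T x| ≤ λ|x| + z`. -/
theorem domination_of_epsBP {X : Type*} [NormedAddCommGroup X] [Lattice X] [HasSolidNorm X]
    [IsOrderedAddMonoid X]
    [NormedSpace ℝ X] [CompleteSpace X] (ε : ℝ) (hε : 0 ≤ ε) (T : X →L[ℝ] X)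
    (hT : IsEpsBandPreserving ε ⇑T) :
    ∀ x : X, ‖x‖ ≤ 1 → ∀ ε' : ℝ, ε < ε' →
      ∃ lam : ℝ, 0 < lam ∧ ∃ z : X, ‖z‖ ≤ ε' ∧ |T x| ≤ lam • |x| + z := by
  intro x hx1 ε' hε'
  have hεε : 0 < ε' - ε := sub_pos.2 hε'
  set u := |x| with hu
  set w := |T x| with hw
  have hu0 : 0 ≤ u := abs_nonneg x
  have hw0 : 0 ≤ w := abs_nonneg _
  have hwT : ‖w‖ ≤ ‖T‖ := by
    rw [hw, norm_abs_eq_norm]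
    calc ‖T x‖ ≤ ‖T‖ * ‖x‖ := T.le_opNorm x
      _ ≤ ‖T‖ * 1 := mul_le_mul_of_nonneg_left hx1 (norm_nonneg T)
      _ = ‖T‖ := mul_one _
  obtain ⟨n, hn⟩ := exists_nat_gt ((‖T‖ ^ 2 + ‖T‖) / (ε' - ε))
  have hA0 : (0:ℝ) ≤ ‖T‖ ^ 2 + ‖T‖ := by positivity
  have hn0 : (0:ℝ) < n := lt_of_le_of_lt (div_nonneg hA0 hεε.le) hn
  set y := (w - n • u) ⊔ 0 with hy
  set m := u ⊓ y with hm
  have hy0 : (0:X) ≤ y := le_sup_right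
  have hm0 : (0:X) ≤ m := le_inf hu0 hy0
  have hyw : y ≤ w := sup_le (sub_le_self _ (nsmul_nonneg hu0 n)) hw0
  -- key estimate : (n+1) • m ≤ w
  have key : (n + 1) • m ≤ w := by
    set q := ((n • u) - w) ⊔ 0 with hq
    have hq0 : (0:X) ≤ q := le_sup_right
    have hyq : y ⊓ q = 0 := by
      have h := aux_pos_inf_neg (w - n • u)
      rwa [neg_sub] at h
    have hmq : m ⊓ q = 0 :=
      le_antisymm (le_trans (inf_le_inf_right q inf_le_right) hyq.le) (le_inf hm0 hq0)
    have hdisj : ((n + 1) • m) ⊓ q = 0 := aux_nsmul_disjoint m q hm0 hq0 hmq (n + 1)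
    have h1 : m + n • u ≤ w ⊔ (n • u) := by
      calc m + n • u ≤ ((w - n • u) ⊔ 0) + n • u := add_le_add_left inf_le_right _
        _ = w ⊔ (n • u) := by rw [sup_add, sub_add_cancel, zero_add]
    have h2 : (n + 1) • m ≤ w ⊔ (n • u) := by
      rw [succ_nsmul]
      calc n • m + m ≤ n • u + m := add_le_add_left (nsmul_le_nsmul_right inf_le_left n) _
        _ = m + n • u := add_comm _ _
        _ ≤ _ := h1
    have h3 : w ⊔ (n • u) = w + q := by
      rw [hq, add_sup, add_sub_cancel, add_zero, sup_comm]
    have h4 : (n + 1) • m - w ≤ ((n + 1) • m) ⊓ q :=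
      le_inf (sub_le_self _ hw0) (sub_le_iff_le_add'.2 (h3 ▸ h2))
    rw [hdisj] at h4
    exact sub_nonpos.1 h4
  have hv0 : (0:X) ≤ (n + 1) • m := nsmul_nonneg hm0 _
  have hmnorm : ((n:ℝ) + 1) * ‖m‖ ≤ ‖T‖ := by
    have hs : ‖(n + 1) • m‖ ≤ ‖w‖ :=
      HasSolidNorm.solid (by rwa [abs_of_nonneg hv0, abs_of_nonneg hw0])
    rw [← Nat.cast_smul_eq_nsmul ℝ, norm_smul, Real.norm_eq_abs] at hs
    have hcast : |((n + 1 : ℕ) : ℝ)| = (n:ℝ) + 1 := by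
      rw [Nat.abs_cast]; push_cast; ring
    rw [hcast] at hs
    exact hs.trans hwT
  have hmn0 : (0:ℝ) ≤ ‖m‖ := norm_nonneg m
  -- clamp x to x''
  set c := (u - y) ⊔ 0 with hc
  have hc0 : (0:X) ≤ c := le_sup_right
  have hcu : c ≤ u := sup_le (sub_le_self _ hy0) hu0
  set x'' := (x ⊓ c) ⊔ (-c) with hx''
  have hx''abs : |x''| ≤ c := by
    rw [abs_le']
    exact ⟨sup_le inf_le_right (neg_le_self hc0), neg_le.2 le_sup_right⟩
  have hx''normx : ‖x''‖ ≤ ‖x‖ := HasSolidNorm.solid (hx''abs.trans hcu)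
  have hx''norm : ‖x''‖ ≤ 1 := hx''normx.trans hx1
  -- the difference x - x''
  have hid : x - x'' = ((x - c) ⊔ 0) - ((-x - c) ⊔ 0) := by
    have e1 : x'' + ((x ⊓ c) ⊓ (-c)) = (x ⊓ c) + (-c) := by
      rw [hx'', add_comm]; exact inf_add_sup _ _
    have e2 : (x ⊓ c) ⊓ (-c) = x ⊓ (-c) := by
      rw [inf_assoc, inf_of_le_right (neg_le_self hc0)]
    have e3 : x - x ⊓ c = (x - c) ⊔ 0 := aux_sub_inf x c
    have e4 : c + x ⊓ (-c) = -((-x - c) ⊔ 0) := by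
      rw [add_inf, add_neg_cancel, neg_sup, neg_zero]
      congr 1
      abel
    have e5 : x'' = (x ⊓ c) + (-c) - (x ⊓ (-c)) := by
      rw [← e2, eq_sub_iff_add_eq]; exact e1
    calc x - x'' = (x - x ⊓ c) + (c + x ⊓ (-c)) := by rw [e5]; abel
      _ = ((x - c) ⊔ 0) - ((-x - c) ⊔ 0) := by rw [e3, e4]; abel
  have hdiffabs : |x - x''| ≤ m := by
    rw [hid]
    refine le_trans (aux_abs_sub_le_sup _ _ le_sup_right le_sup_right) ?_
    have h6 : ((x - c) ⊔ 0) ⊔ ((-x - c) ⊔ 0) ≤ (u - c) ⊔ 0 := by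
      refine sup_le (sup_le ?_ le_sup_right) (sup_le ?_ le_sup_right)
      · exact le_sup_of_le_left (sub_le_sub_right (le_abs_self x) c)
      · exact le_sup_of_le_left (sub_le_sub_right (neg_le_abs x) c)
    refine h6.trans ?_
    have h7 : u - c = m := by
      rw [hc, ← aux_sub_inf u y, sub_sub_cancel, hm]
    rw [h7, sup_of_le_left hm0]
  have hdiffnorm : ‖x - x''‖ ≤ ‖m‖ :=
    HasSolidNorm.solid (by rwa [abs_of_nonneg hm0])
  -- the disjoint part y'
  set y' := (y - u) ⊔ 0 with hy'
  have hy'0 : (0:X) ≤ y' := le_sup_right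
  have hy'y : y' ≤ y := sup_le (sub_le_self _ hu0) hy0
  have hdisj2 : |x''| ⊓ y' = 0 := by
    have hcy' : c ⊓ y' = 0 := by
      have h := aux_pos_inf_neg (u - y)
      rwa [neg_sub] at h
    refine le_antisymm ?_ (le_inf (abs_nonneg _) hy'0)
    exact le_trans (inf_le_inf_right y' hx''abs) hcy'.le
  have hbp : ‖|T x''| ⊓ y'‖ ≤ ε := by
    have h := hT x'' y' hy'0 hdisj2
    calc ‖|T x''| ⊓ y'‖ ≤ ε * ‖x''‖ := h
      _ ≤ ε * 1 := mul_le_mul_of_nonneg_left hx''norm hε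
      _ = ε := mul_one _
  have hsplit : y = y' + m := by
    have h8 : y' + u = y ⊔ u := by rw [hy', sup_add, sub_add_cancel, zero_add]
    have h9 : (u ⊓ y) + (u ⊔ y) = u + y := inf_add_sup u y
    calc y = (u + y) - u := by abel
      _ = ((u ⊓ y) + (u ⊔ y)) - u := by rw [h9]
      _ = ((u ⊔ y) - u) + (u ⊓ y) := by abel
      _ = ((y ⊔ u) - u) + m := by rw [sup_comm u y, hm]
      _ = y' + m := by rw [← h8]; abel
  have hy'norm : ‖y'‖ ≤ ε + ‖T‖ * ‖m‖ := by
    have h10 : y' ⊓ w = y' := inf_of_le_left (hy'y.trans hyw)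
    have h11 : ‖y' ⊓ w - y' ⊓ |T x''|‖ ≤ ‖w - |T x''|‖ := by
      have h := norm_inf_sub_inf_le_add_norm y' w y' (|T x''|)
      simpa using h
    have h12 : ‖w - |T x''|‖ ≤ ‖T‖ * ‖m‖ := by
      rw [hw]
      refine le_trans (norm_abs_sub_abs _ _) ?_
      rw [← map_sub]
      refine le_trans (T.le_opNorm _) ?_
      exact mul_le_mul_of_nonneg_left hdiffnorm (norm_nonneg T)
    calc ‖y'‖ = ‖(y' ⊓ w - y' ⊓ |T x''|) + y' ⊓ |T x''|‖ := by rw [sub_add_cancel, h10]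
      _ ≤ ‖y' ⊓ w - y' ⊓ |T x''|‖ + ‖y' ⊓ |T x''|‖ := norm_add_le _ _
      _ ≤ ‖T‖ * ‖m‖ + ε := add_le_add (h11.trans h12) (by rw [inf_comm]; exact hbp)
      _ = ε + ‖T‖ * ‖m‖ := add_comm _ _
  refine ⟨(n:ℝ), hn0, y, ?_, ?_⟩
  · -- norm bound on z = y
    have hyn : ‖y‖ ≤ ‖y'‖ + ‖m‖ := by rw [hsplit]; exact norm_add_le _ _
    have hT0 : (0:ℝ) ≤ ‖T‖ := norm_nonneg T
    have hnn : (‖T‖ ^ 2 + ‖T‖) < (n : ℝ) * (ε' - ε) := (div_lt_iff₀ hεε).1 hn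
    -- (‖T‖+1) * ‖m‖ ≤ (‖T‖^2+‖T‖)/(n+1) ≤ ε' - ε
    have hkey2 : (‖T‖ + 1) * ‖m‖ ≤ ε' - ε := by
      have h13 : ((n:ℝ) + 1) * ((‖T‖ + 1) * ‖m‖) ≤ (‖T‖ + 1) * ‖T‖ := by
        calc ((n:ℝ) + 1) * ((‖T‖ + 1) * ‖m‖) = (‖T‖ + 1) * (((n:ℝ) + 1) * ‖m‖) := by ring
          _ ≤ (‖T‖ + 1) * ‖T‖ := mul_le_mul_of_nonneg_left hmnorm (by linarith)
      nlinarith [mul_pos hεε hn0]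
    calc ‖y‖ ≤ ‖y'‖ + ‖m‖ := hyn
      _ ≤ (ε + ‖T‖ * ‖m‖) + ‖m‖ := add_le_add hy'norm le_rfl
      _ = ε + (‖T‖ + 1) * ‖m‖ := by ring
      _ ≤ ε + (ε' - ε) := add_le_add le_rfl hkey2
      _ = ε' := by ring
  · -- domination
    have h14 : w ≤ n • u + y := sub_le_iff_le_add'.1 le_sup_left
    rw [Nat.cast_smul_eq_nsmul]
    exact h14
end

section
/- Let X be a Banach lattice, ε ≥ 0, and let T : X → X be a bounded linear operator that is ε-band preserving. Then T is 2ε-disjointness preserving; that is, for all x, y ∈ X with ‖x‖ ≤ 1, ‖y‖ ≤ 1 and |x| ⊓ |y| = 0, one has ‖|T x| ⊓ |T y|‖ ≤ 2ε. -/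
section Aux

variable {X : Type*} [NormedAddCommGroup X] [Lattice X] [IsOrderedAddMonoid X] [HasSolidNorm X]

/-- Subdistributivity of the infimum over addition for nonnegative elements. -/
lemma aux_inf_add_le_s6 {z p q : X} (hz : 0 ≤ z) (hp : 0 ≤ p) (hq : 0 ≤ q) :
    z ⊓ (p + q) ≤ z ⊓ p + z ⊓ q := by
  rw [← sub_le_iff_le_add']
  rw [sub_inf]
  apply sup_le
  · calc z ⊓ (p + q) - z ≤ 0 := sub_nonpos.2 inf_le_left
      _ ≤ z ⊓ q := le_inf hz hq
  · apply le_inf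
    · calc z ⊓ (p + q) - p ≤ z ⊓ (p + q) - 0 := by
            exact sub_le_sub_left hp _
        _ = z ⊓ (p + q) := sub_zero _
        _ ≤ z := inf_le_left
    · exact sub_le_iff_le_add'.2 inf_le_right

lemma aux_nsmul_inf_le {u v : X} (hu : 0 ≤ u) (hv : 0 ≤ v) (n : ℕ) :
    (n • u) ⊓ v ≤ n • (u ⊓ v) := by
  induction n with
  | zero => simp
  | succ k ih =>
      have h1 : ((k + 1) • u) ⊓ v = v ⊓ (k • u + u) := by
        rw [succ_nsmul, inf_comm]
      rw [h1]
      calc v ⊓ (k • u + u) ≤ v ⊓ (k • u) + v ⊓ u :=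
            aux_inf_add_le_s6 hv (nsmul_nonneg hu k) hu
        _ = (k • u) ⊓ v + u ⊓ v := by rw [inf_comm v, inf_comm v]
        _ ≤ k • (u ⊓ v) + u ⊓ v := add_le_add_left ih _
        _ = (k + 1) • (u ⊓ v) := (succ_nsmul _ _).symm

lemma aux_disjoint_nsmul {u v : X} (hu : 0 ≤ u) (hv : 0 ≤ v) (h : u ⊓ v = 0) (n : ℕ) :
    (n • u) ⊓ v = 0 := by
  have h1 : (n • u) ⊓ v ≤ n • (u ⊓ v) := aux_nsmul_inf_le hu hv n
  rw [h, smul_zero] at h1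
  exact le_antisymm h1 (le_inf (nsmul_nonneg hu n) hv)

lemma aux_nonneg_of_nsmul {y : X} {n : ℕ} (hn : n ≠ 0) (h : 0 ≤ n • y) : 0 ≤ y := by
  have h1 : n • y⁻ ≤ n • y⁺ := by
    have hyy : y⁺ = y + y⁻ := (sub_eq_iff_eq_add.mp (posPart_sub_negPart y))
    have : n • y⁻ = n • y⁺ - n • y := by
      rw [← smul_sub]
      congr 1
      rw [hyy]; abel
    rw [this]
    exact sub_le_self _ h
  have h0 : y⁻ ≤ n • y⁻ := by
    obtain ⟨k, rfl⟩ := Nat.exists_eq_succ_of_ne_zero hn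
    rw [succ_nsmul]
    exact le_add_of_nonneg_left (nsmul_nonneg (negPart_nonneg y) k)
  have h2 : y⁻ ≤ n • y⁺ := le_trans h0 h1
  have h3 : y⁻ = (n • y⁺) ⊓ y⁻ := (inf_eq_right.2 h2).symm
  have h4 : (n • y⁺) ⊓ y⁻ ≤ n • (y⁺ ⊓ y⁻) :=
    aux_nsmul_inf_le (posPart_nonneg y) (negPart_nonneg y) n
  rw [posPart_inf_negPart_eq_zero, smul_zero] at h4
  have h5 : y⁻ = 0 := le_antisymm (h3 ▸ h4) (negPart_nonneg y)
  have := posPart_sub_negPart y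
  rw [h5, sub_zero] at this
  rw [← this]
  exact posPart_nonneg y

/-- `u ⊓ v + (u - v)⁺ = u`. -/
lemma aux_inf_add_posPart (u v : X) : u ⊓ v + (u - v)⁺ = u := by
  have h1 : (u - v)⁺ = u ⊔ v - v := by
    rw [posPart_def, sup_sub, sub_self]
  rw [h1]
  have h2 : u ⊓ v + (u ⊔ v - v) = (u ⊓ v + (u ⊔ v)) - v := by abel
  rw [h2, inf_add_sup, add_sub_cancel_right]

/-- `(n • v)⁺ ≤ n • v⁺`. -/
lemma aux_posPart_nsmul_le (v : X) (n : ℕ) : (n • v)⁺ ≤ n • v⁺ := by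
  rw [posPart_def]
  exact sup_le (nsmul_le_nsmul_right (le_posPart v) n) (nsmul_nonneg (posPart_nonneg v) n)

end Aux

set_option maxHeartbeats 1000000 in
/-- A bounded `ε`-band preserving operator on a Banach lattice is `2ε`-disjointness
preserving. -/
theorem epsBP_implies_two_eps_DP {X : Type*} [NormedAddCommGroup X] [Lattice X]
    [IsOrderedAddMonoid X] [HasSolidNorm X]
    [NormedSpace ℝ X] [CompleteSpace X] (ε : ℝ) (hε : 0 ≤ ε) (T : X →L[ℝ] X)
    (hT : IsEpsBandPreserving ε ⇑T) :
    ∀ x y : X, ‖x‖ ≤ 1 → ‖y‖ ≤ 1 → |x| ⊓ |y| = 0 → ‖|T x| ⊓ |T y|‖ ≤ 2 * ε := by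
  intro x y hx hy hxy
  obtain ⟨a, ha_def⟩ : ∃ a : X, a = |T x| ⊓ |T y| := ⟨_, rfl⟩
  rw [← ha_def]
  have ha : 0 ≤ a := by rw [ha_def]; exact le_inf (abs_nonneg _) (abs_nonneg _)
  have haTx : a ≤ |T x| := by rw [ha_def]; exact inf_le_left
  have haTy : a ≤ |T y| := by rw [ha_def]; exact inf_le_right
  have hxpabs : x⁺ ≤ |x| := by
    calc x⁺ ≤ |x|⁺ := posPart_mono (le_abs_self x)
      _ = |x| := posPart_eq_self.2 (abs_nonneg x)
  have hxnabs : x⁻ ≤ |x| := by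
    calc x⁻ = (-x)⁺ := (posPart_neg x).symm
      _ ≤ |x|⁺ := posPart_mono (neg_le_abs x)
      _ = |x| := posPart_eq_self.2 (abs_nonneg x)
  have key : ∀ n : ℕ, n ≠ 0 → ‖a‖ ≤ 2 * ε + (2 * ε + 2 * ‖T‖) * (‖a‖ / n) := by
    intro n hn
    have hnR : (0:ℝ) < (n:ℝ) := Nat.cast_pos.mpr (Nat.pos_of_ne_zero hn)
    -- Part 1 : `‖a ⊓ n • |x|‖ ≤ ε`
    have hnx : 0 ≤ n • |x| := nsmul_nonneg (abs_nonneg x) n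
    have hd1 : |y| ⊓ (n • |x|) = 0 := by
      rw [inf_comm]
      exact aux_disjoint_nsmul (abs_nonneg x) (abs_nonneg y) hxy n
    have h1 : ‖|T y| ⊓ (n • |x|)‖ ≤ ε := by
      calc ‖|T y| ⊓ (n • |x|)‖ ≤ ε * ‖y‖ := hT y (n • |x|) hnx hd1
        _ ≤ ε * 1 := mul_le_mul_of_nonneg_left hy hε
        _ = ε := mul_one ε
    have h1' : ‖a ⊓ (n • |x|)‖ ≤ ε := by
      refine le_trans (norm_le_norm_of_abs_le_abs ?_) h1
      rw [abs_of_nonneg (le_inf ha hnx), abs_of_nonneg (le_inf (abs_nonneg _) hnx)]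
      exact inf_le_inf_right _ haTy
    -- Part 2 : the perturbation `x'` of `x`
    obtain ⟨e, he_def⟩ : ∃ e : X, e = (1 / (n:ℝ)) • a := ⟨_, rfl⟩
    have hne : n • e = a := by
      rw [he_def, ← Nat.cast_smul_eq_nsmul ℝ, smul_smul, mul_one_div,
        div_self (ne_of_gt hnR), one_smul]
    have he : 0 ≤ e := aux_nonneg_of_nsmul hn (by rw [hne]; exact ha)
    have hene : ‖e‖ = ‖a‖ / n := by
      rw [he_def, norm_smul, Real.norm_eq_abs, abs_of_nonneg (by positivity), one_div,
        inv_mul_eq_div]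
    obtain ⟨z, hz_def⟩ : ∃ z : X, z = (a - n • |x|)⁺ := ⟨_, rfl⟩
    have hz : 0 ≤ z := by rw [hz_def]; exact posPart_nonneg _
    obtain ⟨p, hp_def⟩ : ∃ p : X, p = (x⁺ - e)⁺ := ⟨_, rfl⟩
    obtain ⟨q, hq_def⟩ : ∃ q : X, q = (x⁻ - e)⁺ := ⟨_, rfl⟩
    have hp : 0 ≤ p := by rw [hp_def]; exact posPart_nonneg _
    have hq : 0 ≤ q := by rw [hq_def]; exact posPart_nonneg _
    obtain ⟨x', hx'_def⟩ : ∃ x' : X, x' = p - q := ⟨_, rfl⟩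
    have hzinf : ∀ w : X, w ≤ |x| → z ⊓ (w - e)⁺ = 0 := by
      intro w hw
      have hle : z ≤ n • ((e - w)⁺) := by
        rw [hz_def]
        calc (a - n • |x|)⁺ ≤ (a - n • w)⁺ :=
              posPart_mono (sub_le_sub_left (nsmul_le_nsmul_right hw n) a)
          _ = (n • (e - w))⁺ := by rw [smul_sub, hne]
          _ ≤ n • ((e - w)⁺) := aux_posPart_nsmul_le _ n
      have h0 : (e - w)⁺ ⊓ (w - e)⁺ = 0 := by
        have hew : (e - w)⁺ = (w - e)⁻ := by
          rw [← posPart_neg, neg_sub]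
        rw [hew, inf_comm]
        exact posPart_inf_negPart_eq_zero _
      have hle2 : z ⊓ (w - e)⁺ ≤ n • ((e - w)⁺ ⊓ (w - e)⁺) :=
        le_trans (inf_le_inf_right _ hle)
          (aux_nsmul_inf_le (posPart_nonneg _) (posPart_nonneg _) n)
      rw [h0, smul_zero] at hle2
      exact le_antisymm hle2 (le_inf hz (posPart_nonneg _))
    have hzp : z ⊓ p = 0 := by rw [hp_def]; exact hzinf x⁺ hxpabs
    have hzq : z ⊓ q = 0 := by rw [hq_def]; exact hzinf x⁻ hxnabs
    have habsx' : |x'| ≤ p + q := by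
      rw [hx'_def]
      calc |p - q| = |p + (-q)| := by rw [sub_eq_add_neg]
        _ ≤ |p| + |(-q)| := abs_add_le _ _
        _ = p + q := by rw [abs_neg, abs_of_nonneg hp, abs_of_nonneg hq]
    have hdisj : |x'| ⊓ z = 0 := by
      have h2 : |x'| ⊓ z ≤ z ⊓ p + z ⊓ q := by
        calc |x'| ⊓ z ≤ (p + q) ⊓ z := inf_le_inf_right _ habsx'
          _ = z ⊓ (p + q) := inf_comm _ _
          _ ≤ z ⊓ p + z ⊓ q := aux_inf_add_le_s6 hz hp hq
      rw [hzp, hzq, add_zero] at h2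
      exact le_antisymm h2 (le_inf (abs_nonneg _) hz)
    have hTz : ‖|T x'| ⊓ z‖ ≤ ε * ‖x'‖ := hT x' z hz hdisj
    -- distance from `x` to `x'`
    have hxp2 : x⁺ ⊓ e + p = x⁺ := by rw [hp_def]; exact aux_inf_add_posPart x⁺ e
    have hxq2 : x⁻ ⊓ e + q = x⁻ := by rw [hq_def]; exact aux_inf_add_posPart x⁻ e
    have hxsub : x - x' = (x⁺ ⊓ e) - (x⁻ ⊓ e) := by
      have h1p := eq_sub_of_add_eq hxp2
      have h1q := eq_sub_of_add_eq hxq2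
      rw [h1p, h1q, hx'_def]
      have h3 : x⁺ - x⁻ = x := posPart_sub_negPart x
      have h4 : x - (p - q) - ((x⁺ - p) - (x⁻ - q)) = x - (x⁺ - x⁻) := by abel
      rw [h3, sub_self] at h4
      exact sub_eq_zero.mp h4
    have habsxx' : |x - x'| ≤ e + e := by
      rw [hxsub]
      calc |(x⁺ ⊓ e) - (x⁻ ⊓ e)| = |(x⁺ ⊓ e) + (-(x⁻ ⊓ e))| := by rw [sub_eq_add_neg]
        _ ≤ |x⁺ ⊓ e| + |(-(x⁻ ⊓ e))| := abs_add_le _ _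
        _ = (x⁺ ⊓ e) + (x⁻ ⊓ e) := by
            rw [abs_neg, abs_of_nonneg (le_inf (posPart_nonneg x) he),
              abs_of_nonneg (le_inf (negPart_nonneg x) he)]
        _ ≤ e + e := add_le_add inf_le_right inf_le_right
    have hnxx' : ‖x - x'‖ ≤ 2 * ‖e‖ := by
      have h5 : ‖x - x'‖ ≤ ‖e + e‖ := by
        refine norm_le_norm_of_abs_le_abs ?_
        rw [abs_of_nonneg (by positivity : (0:X) ≤ e + e)]
        exact habsxx'
      calc ‖x - x'‖ ≤ ‖e + e‖ := h5
        _ ≤ ‖e‖ + ‖e‖ := norm_add_le _ _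
        _ = 2 * ‖e‖ := by ring
    have hnx' : ‖x'‖ ≤ 1 + 2 * ‖e‖ := by
      calc ‖x'‖ = ‖x - (x - x')‖ := by rw [sub_sub_cancel]
        _ ≤ ‖x‖ + ‖x - x'‖ := norm_sub_le _ _
        _ ≤ 1 + 2 * ‖e‖ := add_le_add hx hnxx'
    -- `z` is dominated by `|T x'| + |T (x - x')|`
    have hza : z ≤ a := by
      rw [hz_def]
      calc (a - n • |x|)⁺ ≤ a⁺ := posPart_mono (sub_le_self _ hnx)
        _ = a := posPart_eq_self.2 ha
    have hsplit : z ≤ |T x'| + |T (x - x')| := by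
      have hTxsum : T x = T x' + T (x - x') := by
        rw [← map_add]
        congr 1
        abel
      calc z ≤ |T x| := le_trans hza haTx
        _ = |T x' + T (x - x')| := by rw [← hTxsum]
        _ ≤ |T x'| + |T (x - x')| := abs_add_le _ _
    have hzle : z ≤ z ⊓ |T x'| + z ⊓ |T (x - x')| := by
      have h3 : z = z ⊓ (|T x'| + |T (x - x')|) := (inf_eq_left.2 hsplit).symm
      nth_rewrite 1 [h3]
      exact aux_inf_add_le_s6 hz (abs_nonneg _) (abs_nonneg _)
    have hznorm : ‖z‖ ≤ ε * (1 + 2 * ‖e‖) + ‖T‖ * (2 * ‖e‖) := by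
      have hs1 : ‖z ⊓ |T x'|‖ ≤ ε * ‖x'‖ := by rwa [inf_comm] at hTz
      have hs2 : ‖z ⊓ |T (x - x')|‖ ≤ ‖T (x - x')‖ := by
        have h4 : ‖z ⊓ |T (x - x')|‖ ≤ ‖|T (x - x')|‖ := by
          refine norm_le_norm_of_abs_le_abs ?_
          rw [abs_of_nonneg (le_inf hz (abs_nonneg _)), abs_of_nonneg (abs_nonneg _)]
          exact inf_le_right
        rwa [norm_abs_eq_norm] at h4
      have h5 : ‖z‖ ≤ ‖z ⊓ |T x'| + z ⊓ |T (x - x')|‖ := by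
        refine norm_le_norm_of_abs_le_abs ?_
        rw [abs_of_nonneg hz, abs_of_nonneg (le_trans hz hzle)]
        exact hzle
      have h6 : ‖T (x - x')‖ ≤ ‖T‖ * (2 * ‖e‖) := by
        calc ‖T (x - x')‖ ≤ ‖T‖ * ‖x - x'‖ := T.le_opNorm _
          _ ≤ ‖T‖ * (2 * ‖e‖) := mul_le_mul_of_nonneg_left hnxx' (norm_nonneg T)
      calc ‖z‖ ≤ ‖z ⊓ |T x'| + z ⊓ |T (x - x')|‖ := h5
        _ ≤ ‖z ⊓ |T x'|‖ + ‖z ⊓ |T (x - x')|‖ := norm_add_le _ _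
        _ ≤ ε * ‖x'‖ + ‖T (x - x')‖ := add_le_add hs1 hs2
        _ ≤ ε * (1 + 2 * ‖e‖) + ‖T‖ * (2 * ‖e‖) :=
            add_le_add (mul_le_mul_of_nonneg_left hnx' hε) h6
    -- assembling
    have hdecomp : a = a ⊓ (n • |x|) + z := by
      rw [hz_def]
      exact (aux_inf_add_posPart a (n • |x|)).symm
    have hfin : ‖a‖ ≤ ε + (ε * (1 + 2 * ‖e‖) + ‖T‖ * (2 * ‖e‖)) := by
      calc ‖a‖ = ‖a ⊓ (n • |x|) + z‖ := by rw [← hdecomp]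
        _ ≤ ‖a ⊓ (n • |x|)‖ + ‖z‖ := norm_add_le _ _
        _ ≤ ε + (ε * (1 + 2 * ‖e‖) + ‖T‖ * (2 * ‖e‖)) := add_le_add h1' hznorm
    rw [hene] at hfin
    nlinarith [norm_nonneg T, hfin]
  -- conclude by letting `n → ∞`
  refine le_of_forall_pos_le_add ?_
  intro δ hδ
  obtain ⟨C, hC⟩ : ∃ C : ℝ, C = (2 * ε + 2 * ‖T‖) * ‖a‖ := ⟨_, rfl⟩
  have hC0 : 0 ≤ C := by rw [hC]; positivity
  obtain ⟨n, hn⟩ := exists_nat_gt (C / δ)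
  have hn0 : n ≠ 0 := by
    rcases Nat.eq_zero_or_pos n with h | h
    · exfalso
      rw [h] at hn
      simp only [Nat.cast_zero] at hn
      have : 0 ≤ C / δ := div_nonneg hC0 hδ.le
      linarith
    · exact Nat.pos_iff_ne_zero.mp h
  have hnR : (0:ℝ) < (n:ℝ) := Nat.cast_pos.mpr (Nat.pos_of_ne_zero hn0)
  have hkey := key n hn0
  have hCn : (2 * ε + 2 * ‖T‖) * (‖a‖ / n) = C / n := by
    rw [hC]; ring
  rw [hCn] at hkey
  have hlast : C / n ≤ δ := by
    rw [div_le_iff₀ hnR]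
    have := (div_lt_iff₀ hδ).mp hn
    linarith
  linarith
end

section
/- Let X be a σ-Dedekind complete Banach lattice, ε ≥ 0, and let T : X → X be a linear map (not assumed continuous) that is ε-band preserving. Then T is 3ε-disjointness preserving; that is, for all x, y ∈ X with ‖x‖ ≤ 1, ‖y‖ ≤ 1 and |x| ⊓ |y| = 0, one has ‖|T x| ⊓ |T y|‖ ≤ 3ε. -/
section Aux

variable {X : Type*} [NormedAddCommGroup X] [Lattice X] [HasSolidNorm X] [IsOrderedAddMonoid X]

/-- `(u + v) ⊓ w ≤ u + v ⊓ w` when `0 ≤ u`. -/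
private lemma aux_inf_le_add {u v w : X} (hu : 0 ≤ u) : (u + v) ⊓ w ≤ u + v ⊓ w := by
  calc (u + v) ⊓ w ≤ (u + v) ⊓ (u + w) :=
        inf_le_inf_left _ (le_add_of_nonneg_left hu)
    _ = u + v ⊓ w := (add_inf v w u).symm

/-- Subadditivity of infimum over sums of positive elements. -/
private lemma aux_add_inf_le_s7 {u v w : X} (hu : 0 ≤ u) (hv : 0 ≤ v) (hw : 0 ≤ w) :
    (u + v) ⊓ w ≤ u ⊓ w + v ⊓ w := by
  have h1 : (u + v) ⊓ w ≤ u + v ⊓ w := aux_inf_le_add hu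
  have h2 : (u + v) ⊓ w ≤ w + v ⊓ w :=
    le_add_of_le_of_nonneg inf_le_right (le_inf hv hw)
  calc (u + v) ⊓ w ≤ (u + v ⊓ w) ⊓ (w + v ⊓ w) := le_inf h1 h2
    _ = u ⊓ w + v ⊓ w := by rw [← inf_add]

/-- Disjointness is preserved by natural scalar multiples. -/
private lemma aux_nsmul_disjoint_s7 {u w : X} (hu : 0 ≤ u) (hw : 0 ≤ w)
    (h : u ⊓ w = 0) (n : ℕ) : (n • u) ⊓ w = 0 := by
  induction n with
  | zero => simpa using inf_eq_left.mpr hw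
  | succ k ih =>
      have hk : 0 ≤ k • u := nsmul_nonneg hu k
      have : ((k • u) + u) ⊓ w ≤ (k • u) ⊓ w + u ⊓ w := aux_add_inf_le_s7 hk hu hw
      rw [ih, h, add_zero] at this
      have h0 : 0 ≤ ((k + 1) • u) ⊓ w := le_inf (nsmul_nonneg hu _) hw
      rw [succ_nsmul] at h0 ⊢
      exact le_antisymm this h0

private lemma aux_nsmul_disjoint₂ {u w : X} (hu : 0 ≤ u) (hw : 0 ≤ w)
    (h : u ⊓ w = 0) (n m : ℕ) : (n • u) ⊓ (m • w) = 0 := by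
  have h1 : (n • u) ⊓ w = 0 := aux_nsmul_disjoint_s7 hu hw h n
  have h2 : (m • w) ⊓ (n • u) = 0 := by
    rw [inf_comm] at h1
    exact aux_nsmul_disjoint_s7 hw (nsmul_nonneg hu n) h1 m
  rw [inf_comm]; exact h2

/-- If `b` is the least upper bound of a sequence of positive elements each
disjoint from `c ≥ 0`, then `b` is disjoint from `c`. -/
private lemma aux_lub_disjoint {a : ℕ → X} {b c : X} (hb : IsLUB (Set.range a) b)
    (ha : ∀ n, 0 ≤ a n) (hc : 0 ≤ c) (h : ∀ n, a n ⊓ c = 0) : b ⊓ c = 0 := by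
  have hab : ∀ n, a n ≤ b := fun n => hb.1 (Set.mem_range_self n)
  have key : ∀ n, a n ≤ b - b ⊓ c := by
    intro n
    have h1 : ((b - a n) + a n) ⊓ c ≤ (b - a n) + a n ⊓ c :=
      aux_inf_le_add (sub_nonneg.mpr (hab n))
    rw [sub_add_cancel, h n, add_zero] at h1
    -- h1 : b ⊓ c ≤ b - a n
    exact le_sub_comm.mp h1
  have hub : b ≤ b - b ⊓ c := hb.2 (by rintro _ ⟨n, rfl⟩; exact key n)
  have hle : b ⊓ c ≤ 0 := by
    have h' := add_le_add_left hub (b ⊓ c)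
    rw [sub_add_cancel] at h'
    exact le_of_add_le_add_left (le_trans h' (le_of_eq (add_zero b).symm))
  have hge : 0 ≤ b ⊓ c := le_inf (le_trans (ha 0) (hab 0)) hc
  exact le_antisymm hle hge

/-- In a σ-Dedekind complete lattice, given `0 ≤ Z` and `0 ≤ e`, `Z` splits as
`b + d` with `b` the lub of `Z ⊓ n • e`, `0 ≤ b`, `0 ≤ d`, `d ⊓ e = 0`. -/
private lemma aux_decomp (hσ : SigmaDedekindComplete X) {Z e : X} (hZ : 0 ≤ Z)
    (he : 0 ≤ e) :
    ∃ b : X, IsLUB (Set.range fun n : ℕ => Z ⊓ n • e) b ∧ 0 ≤ b ∧ b ≤ Z ∧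
      (Z - b) ⊓ e = 0 := by
  set a : ℕ → X := fun n : ℕ => Z ⊓ n • e with ha_def
  have ha_mono : Monotone a := by
    intro n m hnm
    exact inf_le_inf_left _ (nsmul_le_nsmul_left he hnm)
  have ha_le : ∀ n, a n ≤ Z := fun n => inf_le_left
  have ha_bdd : BddAbove (Set.range a) := ⟨Z, by rintro _ ⟨n, rfl⟩; exact ha_le n⟩
  obtain ⟨b, hb⟩ := hσ a ha_mono ha_bdd
  refine ⟨b, hb, ?_, ?_, ?_⟩
  · refine le_trans ?_ (hb.1 (Set.mem_range_self 0))
    simpa [ha_def] using hZ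
  · exact hb.2 (by rintro _ ⟨n, rfl⟩; exact ha_le n)
  · have hbZ : b ≤ Z := hb.2 (by rintro _ ⟨n, rfl⟩; exact ha_le n)
    set c : X := (Z - b) ⊓ e with hc_def
    have hc_le_e : c ≤ e := inf_le_right
    have hc_le : c ≤ Z - b := inf_le_left
    have key : ∀ n, a n ≤ b - c := by
      intro n
      have h1 : c + a n ≤ Z := by
        have : a n ≤ b := hb.1 (Set.mem_range_self n)
        have h2 : c ≤ Z - b := inf_le_left
        calc c + a n ≤ (Z - b) + b := add_le_add h2 this
          _ = Z := by abel
      have h2 : c + a n ≤ (n + 1) • e := by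
        have : a n ≤ n • e := inf_le_right
        calc c + a n ≤ e + n • e := add_le_add hc_le_e this
          _ = (n + 1) • e := by rw [succ_nsmul, add_comm]
      have h3 : c + a n ≤ a (n + 1) := le_inf h1 h2
      have h4 : a (n + 1) ≤ b := hb.1 (Set.mem_range_self (n + 1))
      exact le_sub_iff_add_le'.mpr (le_trans h3 h4)
    have hub : b ≤ b - c := hb.2 (by rintro _ ⟨n, rfl⟩; exact key n)
    have hc0 : 0 ≤ c := by
      refine le_inf (sub_nonneg.mpr hbZ) he
    have h' := add_le_add_left hub c
    rw [sub_add_cancel] at h'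
    have : c ≤ 0 := le_of_add_le_add_left (le_trans h' (le_of_eq (add_zero b).symm))
    exact le_antisymm this hc0

end Aux

/-- On a σ-Dedekind complete Banach lattice, any `ε`-band preserving linear map
(not assumed continuous) is `3ε`-disjointness preserving. -/
theorem epsBP_implies_three_eps_DP {X : Type*} [NormedAddCommGroup X] [Lattice X]
    [HasSolidNorm X] [IsOrderedAddMonoid X]
    [NormedSpace ℝ X] [CompleteSpace X] (hσ : SigmaDedekindComplete X)
    (ε : ℝ) (hε : 0 ≤ ε) (T : X →ₗ[ℝ] X) (hT : IsEpsBandPreserving ε ⇑T) :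
    ∀ x y : X, ‖x‖ ≤ 1 → ‖y‖ ≤ 1 → |x| ⊓ |y| = 0 → ‖|T x| ⊓ |T y|‖ ≤ 3 * ε := by
  intro x y hx hy hxy
  -- decompose |T x| with respect to |y|, and |T y| with respect to |x|
  obtain ⟨b, hb_lub, hb0, hbZ, hbd⟩ := aux_decomp hσ (abs_nonneg (T x)) (abs_nonneg y)
  obtain ⟨b', hb'_lub, hb'0, hb'Z, hb'd⟩ := aux_decomp hσ (abs_nonneg (T y)) (abs_nonneg x)
  set d : X := |T x| - b with hd_def
  set d' : X := |T y| - b' with hd'_def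
  have hd0 : 0 ≤ d := sub_nonneg.mpr hbZ
  have hd'0 : 0 ≤ d' := sub_nonneg.mpr hb'Z
  have hde : d ⊓ |y| = 0 := hbd
  have hd'e : d' ⊓ |x| = 0 := hb'd
  -- b ⊓ b' = 0
  have hyx : |y| ⊓ |x| = 0 := by rw [inf_comm]; exact hxy
  have ha_nonneg : ∀ n : ℕ, (0 : X) ≤ |T x| ⊓ n • |y| :=
    fun n => le_inf (abs_nonneg _) (nsmul_nonneg (abs_nonneg y) n)
  have ha'_nonneg : ∀ n : ℕ, (0 : X) ≤ |T y| ⊓ n • |x| :=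
    fun n => le_inf (abs_nonneg _) (nsmul_nonneg (abs_nonneg x) n)
  have hbb' : b ⊓ b' = 0 := by
    have step1 : ∀ m : ℕ, b ⊓ (|T y| ⊓ m • |x|) = 0 := by
      intro m
      refine aux_lub_disjoint hb_lub ha_nonneg
        (le_inf (abs_nonneg _) (nsmul_nonneg (abs_nonneg x) m)) ?_
      intro n
      have hnm : (n • |y|) ⊓ (m • |x|) = 0 :=
        aux_nsmul_disjoint₂ (abs_nonneg y) (abs_nonneg x) hyx n m
      have hle : (|T x| ⊓ n • |y|) ⊓ (|T y| ⊓ m • |x|) ≤ (n • |y|) ⊓ (m • |x|) :=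
        inf_le_inf inf_le_right inf_le_right
      rw [hnm] at hle
      exact le_antisymm hle (le_inf (ha_nonneg n) (ha'_nonneg m))
    have : b' ⊓ b = 0 := by
      refine aux_lub_disjoint hb'_lub ha'_nonneg hb0 ?_
      intro m
      rw [inf_comm]
      exact step1 m
    rw [inf_comm]; exact this
  -- the three ε-bounds
  have eps1 : ‖|T x| ⊓ d'‖ ≤ ε := by
    have := hT x d' hd'0 (by rw [inf_comm] at hd'e; exact hd'e)
    calc ‖|T x| ⊓ d'‖ ≤ ε * ‖x‖ := this
      _ ≤ ε * 1 := mul_le_mul_of_nonneg_left hx hε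
      _ = ε := mul_one ε
  have eps2 : ‖|T y| ⊓ d‖ ≤ ε := by
    have := hT y d hd0 (by rw [inf_comm] at hde; exact hde)
    calc ‖|T y| ⊓ d‖ ≤ ε * ‖y‖ := this
      _ ≤ ε * 1 := mul_le_mul_of_nonneg_left hy hε
      _ = ε := mul_one ε
  -- main decomposition inequality
  have habs : 0 ≤ |T y| := abs_nonneg _
  have hsplit : |T x| ⊓ |T y| ≤ b ⊓ d' + (d ⊓ b' + d ⊓ d') := by
    have h1 : |T x| ⊓ |T y| ≤ b ⊓ |T y| + d ⊓ |T y| := by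
      have : (b + d) ⊓ |T y| ≤ b ⊓ |T y| + d ⊓ |T y| :=
        aux_add_inf_le_s7 hb0 hd0 habs
      rwa [hd_def, add_sub_cancel] at this
    have h2 : b ⊓ |T y| ≤ b ⊓ b' + b ⊓ d' := by
      have : |T y| = b' + d' := by rw [hd'_def]; abel
      rw [this, inf_comm b (b' + d')]
      calc (b' + d') ⊓ b ≤ b' ⊓ b + d' ⊓ b := aux_add_inf_le_s7 hb'0 hd'0 hb0
        _ = b ⊓ b' + b ⊓ d' := by rw [inf_comm b' b, inf_comm d' b]
    have h3 : d ⊓ |T y| ≤ d ⊓ b' + d ⊓ d' := by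
      have : |T y| = b' + d' := by rw [hd'_def]; abel
      rw [this, inf_comm d (b' + d')]
      calc (b' + d') ⊓ d ≤ b' ⊓ d + d' ⊓ d := aux_add_inf_le_s7 hb'0 hd'0 hd0
        _ = d ⊓ b' + d ⊓ d' := by rw [inf_comm b' d, inf_comm d' d]
    calc |T x| ⊓ |T y| ≤ b ⊓ |T y| + d ⊓ |T y| := h1
      _ ≤ (b ⊓ b' + b ⊓ d') + (d ⊓ b' + d ⊓ d') := add_le_add h2 h3
      _ = b ⊓ d' + (d ⊓ b' + d ⊓ d') := by rw [hbb', zero_add]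
  -- norm bounds
  have hnn : (0 : X) ≤ |T x| ⊓ |T y| := le_inf (abs_nonneg _) (abs_nonneg _)
  have hnorm : ‖|T x| ⊓ |T y|‖ ≤ ‖b ⊓ d' + (d ⊓ b' + d ⊓ d')‖ := by
    apply norm_le_norm_of_abs_le_abs
    rw [abs_of_nonneg hnn]
    have h0 : (0 : X) ≤ b ⊓ d' + (d ⊓ b' + d ⊓ d') := by
      have := le_inf hb0 hd'0
      have := le_inf hd0 hb'0
      have := le_inf hd0 hd'0
      positivity
    rw [abs_of_nonneg h0]
    exact hsplit
  have hbd'_le : ‖b ⊓ d'‖ ≤ ε := by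
    refine le_trans (norm_le_norm_of_abs_le_abs ?_) eps1
    rw [abs_of_nonneg (le_inf hb0 hd'0), abs_of_nonneg (le_inf (abs_nonneg _) hd'0)]
    exact inf_le_inf_right _ hbZ
  have hdb'_le : ‖d ⊓ b'‖ ≤ ε := by
    refine le_trans (norm_le_norm_of_abs_le_abs ?_) eps2
    rw [abs_of_nonneg (le_inf hd0 hb'0), abs_of_nonneg (le_inf habs hd0)]
    rw [inf_comm (|T y|) d]
    exact inf_le_inf_left _ hb'Z
  have hdd'_le : ‖d ⊓ d'‖ ≤ ε := by
    refine le_trans (norm_le_norm_of_abs_le_abs ?_) eps2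
    rw [abs_of_nonneg (le_inf hd0 hd'0), abs_of_nonneg (le_inf habs hd0)]
    rw [inf_comm (|T y|) d]
    exact inf_le_inf_left _ (sub_le_self _ hb'0)
  calc ‖|T x| ⊓ |T y|‖ ≤ ‖b ⊓ d' + (d ⊓ b' + d ⊓ d')‖ := hnorm
    _ ≤ ‖b ⊓ d'‖ + (‖d ⊓ b'‖ + ‖d ⊓ d'‖) := by
        refine le_trans (norm_add_le _ _) (add_le_add_right (norm_add_le _ _) _)
    _ ≤ ε + (ε + ε) := by gcongr
    _ = 3 * ε := by ring
end

section
/- Let K be a locally compact Hausdorff topological space and let (s_n)_{n ∈ ℕ} be a sequence of pairwise distinct points of K. Then there exist a strictly increasing sequence of indices n_1 < n_2 < n_3 < ⋯ and a family (U_k)_{k ∈ ℕ} of pairwise disjoint open subsets of K such that s_{n_k} ∈ U_k for every k. -/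
/-- Given a sequence of distinct points in a locally compact Hausdorff space, there is a
subsequence together with pairwise disjoint open sets, each containing the corresponding
point of the subsequence. -/
theorem exists_disjoint_opens_of_injective_seq {K : Type*} [TopologicalSpace K]
    [T2Space K] [LocallyCompactSpace K] (s : ℕ → K) (hs : Function.Injective s) :
    ∃ n : ℕ → ℕ, StrictMono n ∧ ∃ U : ℕ → Set K, (∀ k, IsOpen (U k)) ∧
      (Pairwise fun i j => Disjoint (U i) (U j)) ∧ ∀ k, s (n k) ∈ U k := by
  classical
  have key : ∀ (T : Set ℕ), T.Infinite → ∀ V : Set K, IsOpen V → (∀ m ∈ T, s m ∈ V) →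
      ∃ n ∈ T, ∃ U W : Set K, IsOpen U ∧ IsOpen W ∧ s n ∈ U ∧ U ⊆ V ∧ W ⊆ V ∧
        Disjoint U W ∧ {m ∈ T | s m ∈ W ∧ n < m}.Infinite := by
    intro T hT V hV hTV
    obtain ⟨p, hp⟩ := hT.nonempty
    obtain ⟨q, hq⟩ := (hT.diff (Set.finite_singleton p)).nonempty
    have hq' : q ∈ T := hq.1
    have hqp : s q ≠ s p := fun h => hq.2 (hs h)
    by_cases h : ∀ N ∈ nhds (s p), {m ∈ T | s m ∈ N}.Infinite
    · obtain ⟨U, W, hU, hW, hqU, hpW, hUW⟩ := t2_separation hqp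
      refine ⟨q, hq', U ∩ V, W ∩ V, hU.inter hV, hW.inter hV, ⟨hqU, hTV q hq'⟩,
        Set.inter_subset_right, Set.inter_subset_right,
        hUW.mono Set.inter_subset_left Set.inter_subset_left, ?_⟩
      have h1 : {m ∈ T | s m ∈ W}.Infinite := h W (hW.mem_nhds hpW)
      have hsub : {m ∈ T | s m ∈ W} \ Set.Iic q ⊆ {m ∈ T | s m ∈ W ∩ V ∧ q < m} := by
        rintro m ⟨⟨hmT, hmW⟩, hm⟩
        exact ⟨hmT, ⟨hmW, hTV m hmT⟩, lt_of_not_ge fun hh => hm hh⟩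
      exact (h1.diff (Set.finite_Iic q)).mono hsub
    · push_neg at h
      obtain ⟨N, hN, hNfin⟩ := h
      have hNV : N ∩ V ∈ nhds (s p) := Filter.inter_mem hN (hV.mem_nhds (hTV p hp))
      obtain ⟨C, hCn, hCc, hCsub⟩ := exists_mem_nhds_isClosed_subset hNV
      refine ⟨p, hp, interior C, Cᶜ ∩ V, isOpen_interior, hCc.isOpen_compl.inter hV,
        mem_interior_iff_mem_nhds.2 hCn,
        interior_subset.trans (hCsub.trans Set.inter_subset_right),
        Set.inter_subset_right, ?_, ?_⟩
      · exact Set.disjoint_left.2 fun x hx hx2 => hx2.1 (interior_subset hx)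
      · have hsub : (T \ {m ∈ T | s m ∈ N}) \ Set.Iic p ⊆ {m ∈ T | s m ∈ Cᶜ ∩ V ∧ p < m} := by
          rintro m ⟨⟨hmT, hmN⟩, hm⟩
          exact ⟨hmT, ⟨⟨fun hc => hmN ⟨hmT, (hCsub hc).1⟩, hTV m hmT⟩,
            lt_of_not_ge fun hh => hm hh⟩⟩
        exact ((hT.diff hNfin).diff (Set.finite_Iic p)).mono hsub
  -- state: (index, its open set U, remaining open region W, remaining index set T)
  let St := {x : ℕ × Set K × Set K × Set ℕ //
    IsOpen x.2.1 ∧ IsOpen x.2.2.1 ∧ s x.1 ∈ x.2.1 ∧ Disjoint x.2.1 x.2.2.1 ∧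
      x.2.2.2.Infinite ∧ ∀ m ∈ x.2.2.2, s m ∈ x.2.2.1 ∧ x.1 < m}
  have step : ∀ x : St, ∃ y : St, y.1.1 ∈ x.1.2.2.2 ∧ y.1.2.1 ⊆ x.1.2.2.1 ∧
      y.1.2.2.1 ⊆ x.1.2.2.1 := by
    rintro ⟨⟨n0, U0, W0, T0⟩, hU0, hW0, hn0, hd0, hT0, hm0⟩
    obtain ⟨n, hnT, U, W, hU, hW, hnU, hUW0, hWW0, hUW, hInf⟩ :=
      key T0 hT0 W0 hW0 fun m hm => (hm0 m hm).1
    exact ⟨⟨⟨n, U, W, {m ∈ T0 | s m ∈ W ∧ n < m}⟩, hU, hW, hnU, hUW, hInf,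
      fun m hm => ⟨hm.2.1, hm.2.2⟩⟩, hnT, hUW0, hWW0⟩
  choose stepf hstep1 hstep2 hstep3 using step
  obtain ⟨n0, _, U0, W0, hU0, hW0, hs0, _, _, hd0, hInf0⟩ :=
    key Set.univ Set.infinite_univ Set.univ isOpen_univ fun _ _ => trivial
  let init : St := ⟨⟨n0, U0, W0, {m ∈ Set.univ | s m ∈ W0 ∧ n0 < m}⟩,
    hU0, hW0, hs0, hd0, hInf0, fun m hm => ⟨hm.2.1, hm.2.2⟩⟩
  let g : ℕ → St := fun k => Nat.rec init (fun _ x => stepf x) k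
  have hg : ∀ k, g (k + 1) = stepf (g k) := fun k => rfl
  set n : ℕ → ℕ := fun k => (g k).1.1 with hn
  set U : ℕ → Set K := fun k => (g k).1.2.1 with hU
  set W : ℕ → Set K := fun k => (g k).1.2.2.1 with hW
  have hmono : StrictMono n := by
    apply strictMono_nat_of_lt_succ
    intro k
    have h1 : (stepf (g k)).1.1 ∈ (g k).1.2.2.2 := hstep1 (g k)
    have h2 := ((g k).2.2.2.2.2.2 _ h1).2
    simpa [hn, hg k] using h2
  have hWanti : ∀ i j, i ≤ j → W j ⊆ W i := by
    intro i j hij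
    induction j with
    | zero => simp [Nat.le_zero.1 hij]
    | succ j ih =>
      rcases Nat.lt_or_ge i (j + 1) with h | h
      · have : W (j + 1) ⊆ W j := by simpa [hW, hg j] using hstep3 (g j)
        exact this.trans (ih (Nat.lt_succ_iff.1 h))
      · have : i = j + 1 := le_antisymm hij h
        simp [this]
  have hUW : ∀ i j, i < j → U j ⊆ W i := by
    intro i j hij
    have h1 : U j ⊆ W (j - 1) := by
      obtain ⟨j', rfl⟩ := Nat.exists_eq_add_of_lt hij
      simpa [hW, hU, hg] using hstep2 (g (i + j'))
    exact h1.trans (hWanti i (j - 1) (by omega))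
  refine ⟨n, hmono, U, fun k => (g k).2.1, ?_, fun k => (g k).2.2.2.1⟩
  intro i j hij
  rcases Nat.lt_or_ge i j with h | h
  · exact ((g i).2.2.2.2.1.mono_right (hUW i j h))
  · have h' : j < i := lt_of_le_of_ne h (Ne.symm hij)
    exact ((g j).2.2.2.2.1.mono_right (hUW j i h')).symm
end

section
/- Let K be a compact Hausdorff space, let C(K) denote the Banach lattice of continuous real-valued functions on K with supremum norm and pointwise order, and let ε ≥ 0. Then every ε-band preserving linear map T : C(K) → C(K) is continuous (bounded). -/
section Aux

open Set Filter Topology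

variable {K : Type*} [TopologicalSpace K] [CompactSpace K] [T2Space K]

lemma eps_local (ε : ℝ) (T : C(K, ℝ) →ₗ[ℝ] C(K, ℝ))
    (hT : IsEpsBandPreserving ε ⇑T) (x : C(K, ℝ)) (t : K) (ht : t ∉ tsupport ⇑x) :
    |T x t| ≤ ε * ‖x‖ := by
  obtain ⟨f, hf0, hf1, hf01⟩ := exists_continuous_zero_one_of_isClosed
    (isClosed_tsupport ⇑x) (isClosed_singleton (x := t))
    (disjoint_singleton_right.mpr ht)
  set M := ‖T x‖ with hM
  have hM0 : 0 ≤ M := norm_nonneg _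
  set y : C(K, ℝ) := M • f with hy
  have hy0 : (0 : C(K, ℝ)) ≤ y := by
    intro s
    simp only [hy, ContinuousMap.smul_apply, ContinuousMap.zero_apply, smul_eq_mul]
    exact mul_nonneg hM0 (hf01 s).1
  have hdisj : |x| ⊓ y = 0 := by
    ext s
    simp only [ContinuousMap.inf_apply, ContinuousMap.abs_apply,
      ContinuousMap.zero_apply, hy, ContinuousMap.smul_apply, smul_eq_mul]
    by_cases hs : x s = 0
    · rw [hs, abs_zero]
      exact inf_eq_left.mpr (mul_nonneg hM0 (hf01 s).1)
    · have hsup : s ∈ tsupport ⇑x := subset_tsupport _ hs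
      rw [hf0 hsup]
      simp [abs_nonneg]
  have hkey := hT x y hy0 hdisj
  have hval : |T x t| ≤ ‖|T x| ⊓ y‖ := by
    have h1 : (|T x| ⊓ y) t = min (|T x t|) M := by
      simp [ContinuousMap.inf_apply, ContinuousMap.abs_apply, hy, hf1 rfl]
    have h2 : min (|T x t|) M = |T x t| :=
      min_eq_left ((ContinuousMap.norm_coe_le_norm (T x) t).trans_eq (by simp [hM]))
    calc |T x t| = (|T x| ⊓ y) t := by rw [h1, h2]
      _ ≤ ‖(|T x| ⊓ y)‖ := by
          have := ContinuousMap.norm_coe_le_norm (|T x| ⊓ y) t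
          exact (le_abs_self _).trans (by simpa using this)
  exact hval.trans hkey

lemma bounded_of_forall_loc (T : C(K, ℝ) →ₗ[ℝ] C(K, ℝ))
    (hreg : ∀ t : K, ∃ U : Set K, ∃ C : ℝ, IsOpen U ∧ t ∈ U ∧
      ∀ x : C(K, ℝ), tsupport ⇑x ⊆ U → ‖T x‖ ≤ C * ‖x‖) :
    ∃ C : ℝ, ∀ x : C(K, ℝ), ‖T x‖ ≤ C * ‖x‖ := by
  choose U C hUo hUm hUb using hreg
  obtain ⟨f, hf⟩ := PartitionOfUnity.exists_isSubordinate (s := (univ : Set K))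
    isClosed_univ U hUo (fun t _ => mem_iUnion.mpr ⟨t, hUm t⟩)
  have hfin : {i : K | (Function.support ⇑(f i)).Nonempty}.Finite :=
    f.locallyFinite.finite_nonempty_of_compact
  set S := hfin.toFinset with hS
  refine ⟨∑ i ∈ S, max (C i) 0, fun x => ?_⟩
  have hdecomp : x = ∑ i ∈ S, (f i : C(K, ℝ)) * x := by
    ext s
    rw [ContinuousMap.coe_sum, Finset.sum_apply]
    have h1 : ∑ i ∈ S, ((f i : C(K, ℝ)) * x) s = (∑ i ∈ S, f i s) * x s := by
      rw [Finset.sum_mul]; rfl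
    have h2 : (∑ i ∈ S, f i s) = 1 := by
      rw [← f.sum_eq_one (mem_univ s)]
      refine (finsum_eq_sum_of_support_subset _ ?_).symm
      intro i hi
      simp only [hS, Finite.coe_toFinset, mem_setOf_eq]
      exact ⟨s, hi⟩
    simp only [h1, h2, one_mul]
  have hnorm : ∀ i : K, ‖(f i : C(K, ℝ)) * x‖ ≤ ‖x‖ := by
    intro i
    refine (ContinuousMap.norm_le ((f i : C(K, ℝ)) * x) (norm_nonneg x)).mpr fun s => ?_
    simp only [ContinuousMap.mul_apply, norm_mul]
    calc ‖f i s‖ * ‖x s‖ ≤ 1 * ‖x s‖ := by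
          apply mul_le_mul_of_nonneg_right _ (norm_nonneg _)
          rw [Real.norm_eq_abs, abs_of_nonneg (f.nonneg i s)]
          exact f.le_one i s
      _ = ‖x s‖ := one_mul _
      _ ≤ ‖x‖ := ContinuousMap.norm_coe_le_norm x s
  have hsupp : ∀ i : K, tsupport ⇑((f i : C(K, ℝ)) * x) ⊆ U i := by
    intro i
    refine subset_trans (closure_mono ?_) (hf i)
    intro s hs
    simp only [Function.mem_support, ContinuousMap.mul_apply] at hs
    exact Function.mem_support.mpr fun h0 => hs (by rw [h0, zero_mul])
  calc ‖T x‖ = ‖∑ i ∈ S, T ((f i : C(K, ℝ)) * x)‖ := by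
        rw [← map_sum, ← hdecomp]
    _ ≤ ∑ i ∈ S, ‖T ((f i : C(K, ℝ)) * x)‖ := norm_sum_le _ _
    _ ≤ ∑ i ∈ S, (max (C i) 0) * ‖x‖ := by
        refine Finset.sum_le_sum fun i _ => ?_
        calc ‖T ((f i : C(K, ℝ)) * x)‖ ≤ C i * ‖(f i : C(K, ℝ)) * x‖ :=
              hUb i _ (hsupp i)
          _ ≤ max (C i) 0 * ‖(f i : C(K, ℝ)) * x‖ := by
              exact mul_le_mul_of_nonneg_right (le_max_left _ _) (norm_nonneg _)
          _ ≤ max (C i) 0 * ‖x‖ := by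
              exact mul_le_mul_of_nonneg_left (hnorm i) (le_max_right _ _)
    _ = (∑ i ∈ S, max (C i) 0) * ‖x‖ := (Finset.sum_mul _ _ _).symm

lemma no_singular (ε : ℝ) (hε : 0 ≤ ε) (T : C(K, ℝ) →ₗ[ℝ] C(K, ℝ))
    (hT : IsEpsBandPreserving ε ⇑T) (t₀ : K)
    (hsing : ∀ V : Set K, IsOpen V → t₀ ∈ V → ∀ Cb : ℝ,
      ∃ x : C(K, ℝ), tsupport ⇑x ⊆ V ∧ ¬ ‖T x‖ ≤ Cb * ‖x‖) : False := by
  -- t₀ is not an isolated point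
  have hniso : ¬ IsOpen ({t₀} : Set K) := by
    intro hiso
    obtain ⟨χ, hχ0, hχ1, hχ01⟩ := exists_continuous_zero_one_of_isClosed
      (isClosed_compl_iff.mpr hiso) isClosed_singleton
      (disjoint_compl_left_iff_subset.mpr subset_rfl)
    obtain ⟨x, hxsupp, hxnb⟩ := hsing {t₀} hiso rfl ‖T χ‖
    apply hxnb
    obtain ⟨a, hxeq⟩ : ∃ a : ℝ, x = a • χ := by
      refine ⟨x t₀, ?_⟩
      ext s
      by_cases hs : s = t₀
      · subst hs; simp [hχ1 rfl]
      · have h1 : x s = 0 := by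
          apply image_eq_zero_of_notMem_tsupport
          intro hmem
          exact hs (hxsupp hmem)
        have h2 : χ s = 0 := hχ0 hs
        simp [h1, h2]
    have hχt : χ t₀ = 1 := by simpa using hχ1 (mem_singleton t₀)
    have hax : |a| ≤ ‖x‖ := by
      have h3 : |a| = ‖x t₀‖ := by
        rw [hxeq]
        simp [hχt, Real.norm_eq_abs]
      rw [h3]
      exact ContinuousMap.norm_coe_le_norm x t₀
    calc ‖T x‖ = ‖a • T χ‖ := by rw [hxeq, map_smul]
      _ = |a| * ‖T χ‖ := by
          rw [show ‖a • T χ‖ = ‖a‖ * ‖T χ‖ from norm_smul a (T χ), Real.norm_eq_abs]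
      _ ≤ ‖x‖ * ‖T χ‖ := mul_le_mul_of_nonneg_right hax (norm_nonneg _)
      _ = ‖T χ‖ * ‖x‖ := mul_comm _ _
  have ht0cl : t₀ ∈ closure ({t₀}ᶜ : Set K) := by
    by_contra hcl
    apply hniso
    have : closure ({t₀}ᶜ : Set K) ⊆ {t₀}ᶜ := by
      intro s hs
      intro hseq
      rw [mem_singleton_iff] at hseq
      exact hcl (hseq ▸ hs)
    have hclosed : IsClosed ({t₀}ᶜ : Set K) := closure_subset_iff_isClosed.mp this
    simpa using hclosed.isOpen_compl
  -- the choice step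
  have pick : ∀ (V : Set K), IsOpen V → t₀ ∈ V → ∀ (n : ℕ) (A : ℝ), 0 ≤ A →
      ∃ (x : C(K, ℝ)) (t : K), tsupport ⇑x ⊆ V ∧ ‖x‖ ≤ (1/2 : ℝ)^n ∧ t ≠ t₀ ∧
        A ≤ |T x t| := by
    intro V hVo hVm n A hA
    obtain ⟨z, hzsupp, hznb⟩ := hsing V hVo hVm ((2*A+1) * 2^n)
    have hz' : (2*A+1) * 2^n * ‖z‖ < ‖T z‖ := not_le.mp hznb
    have hzne : z ≠ 0 := by
      intro h0
      rw [h0] at hz'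
      simp only [map_zero, norm_zero, mul_zero] at hz'
      exact lt_irrefl 0 hz'
    have hznorm : (0:ℝ) < ‖z‖ := norm_pos_iff.mpr hzne
    set c : ℝ := (1/2:ℝ)^n / ‖z‖ with hc
    have hcpos : 0 < c := by positivity
    set x : C(K, ℝ) := c • z with hx
    have hxsupp : tsupport ⇑x ⊆ V := by
      refine subset_trans (closure_mono ?_) hzsupp
      intro s hs
      simp only [Function.mem_support, hx, ContinuousMap.smul_apply, smul_eq_mul] at hs ⊢
      intro h0; exact hs (by rw [h0, mul_zero])
    have hxnorm : ‖x‖ = (1/2:ℝ)^n := by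
      rw [hx, show ‖c • z‖ = ‖c‖ * ‖z‖ from norm_smul c z, Real.norm_eq_abs,
        abs_of_pos hcpos, hc, div_mul_cancel₀ _ (ne_of_gt hznorm)]
    have hTx : 2*A < ‖T x‖ := by
      have : ‖T x‖ = c * ‖T z‖ := by
        rw [hx, map_smul, show ‖c • T z‖ = ‖c‖ * ‖T z‖ from norm_smul c (T z),
          Real.norm_eq_abs, abs_of_pos hcpos]
      rw [this]
      calc 2*A < 2*A + 1 := by linarith
        _ = c * ((2*A+1) * 2^n * ‖z‖) := by
            rw [hc, div_mul_eq_mul_div, eq_div_iff (ne_of_gt hznorm)]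
            rw [show (1/2:ℝ)^n * ((2*A+1)*2^n*‖z‖) = ((1/2)^n*2^n) * ((2*A+1)*‖z‖) by ring, ← mul_pow]
            norm_num
        _ < c * ‖T z‖ := by
            exact mul_lt_mul_of_pos_left hz' hcpos
    -- find t ≠ t₀ with A ≤ |T x t|
    have hW : ∃ t, t ≠ t₀ ∧ 2*A < |T x t| := by
      obtain ⟨ts, hts⟩ : ∃ s, 2*A < |T x s| := by
        by_contra hall
        push_neg at hall
        have : ‖T x‖ ≤ 2*A := (ContinuousMap.norm_le (T x) (by linarith)).mpr
          (fun s => by rw [Real.norm_eq_abs]; exact hall s)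
        linarith
      by_cases hts0 : ts = t₀
      · subst hts0
        have hWopen : IsOpen {s : K | 2*A < |T x s|} := by
          have : Continuous fun s => |T x s| := (T x).continuous.abs
          exact isOpen_lt continuous_const this
        obtain ⟨t, htW, htne⟩ := mem_closure_iff.mp ht0cl _ hWopen hts
        exact ⟨t, htne, htW⟩
      · exact ⟨ts, hts0, hts⟩
    obtain ⟨t, htne, htval⟩ := hW
    exact ⟨x, t, hxsupp, le_of_eq hxnorm, htne, by linarith⟩
  -- the inductive step
  have step : ∀ (V : Set K) (h : C(K, ℝ)) (n : ℕ), IsOpen V → t₀ ∈ V →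
      ∃ (x : C(K, ℝ)) (t : K) (V' : Set K),
        tsupport ⇑x ⊆ V ∧ ‖x‖ ≤ (1/2 : ℝ)^n ∧
        ((n : ℝ) + 2*ε + ‖T h‖ + 1 ≤ |T x t|) ∧
        IsOpen V' ∧ t₀ ∈ V' ∧ V' ⊆ V ∧ t ∉ closure V' := by
    intro V h n hVo hVm
    obtain ⟨x, t, hxs, hxn, htne, htv⟩ :=
      pick V hVo hVm n ((n : ℝ) + 2*ε + ‖T h‖ + 1) (by positivity)
    have hVt : V \ {t} ∈ 𝓝 t₀ := by
      apply IsOpen.mem_nhds (hVo.sdiff isClosed_singleton)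
      exact ⟨hVm, fun hc => htne (Set.mem_singleton_iff.mp hc).symm⟩
    obtain ⟨W, hWnhds, hWclosed, hWsub⟩ := exists_mem_nhds_isClosed_subset hVt
    refine ⟨x, t, interior W, hxs, hxn, htv, isOpen_interior,
      mem_interior_iff_mem_nhds.mpr hWnhds, ?_, ?_⟩
    · exact interior_subset.trans (hWsub.trans diff_subset)
    · intro hmem
      have htW : t ∈ W := (closure_minimal interior_subset hWclosed) hmem
      exact (hWsub htW).2 rfl
  haveI : Nonempty K := ⟨t₀⟩
  choose! xf tf Vf hP1 hP2 hP3 hP4 hP5 hP6 hP7 using step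
  obtain ⟨Q, hQ0, hQs⟩ : ∃ Q : ℕ → Set K × C(K, ℝ), Q 0 = (univ, 0) ∧
      ∀ n, Q (n+1) = (Vf (Q n).1 (Q n).2 n, (Q n).2 + xf (Q n).1 (Q n).2 n) :=
    ⟨fun n => Nat.rec ((univ : Set K), (0 : C(K, ℝ)))
      (fun m p => (Vf p.1 p.2 m, p.2 + xf p.1 p.2 m)) n, rfl, fun _ => rfl⟩
  have hinv : ∀ n, IsOpen (Q n).1 ∧ t₀ ∈ (Q n).1 := by
    intro n
    induction n with
    | zero => rw [hQ0]; exact ⟨isOpen_univ, mem_univ _⟩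
    | succ m ih =>
        rw [hQs m]
        exact ⟨hP4 _ _ _ ih.1 ih.2, hP5 _ _ _ ih.1 ih.2⟩
  set x : ℕ → C(K, ℝ) := fun n => xf (Q n).1 (Q n).2 n with hxdef
  set t : ℕ → K := fun n => tf (Q n).1 (Q n).2 n with htdef
  have hsupp : ∀ n, tsupport ⇑(x n) ⊆ (Q n).1 :=
    fun n => hP1 _ _ _ (hinv n).1 (hinv n).2
  have hnorm : ∀ n, ‖x n‖ ≤ (1/2 : ℝ)^n :=
    fun n => hP2 _ _ _ (hinv n).1 (hinv n).2
  have hval : ∀ n : ℕ, (n : ℝ) + 2*ε + ‖T (Q n).2‖ + 1 ≤ |T (x n) (t n)| :=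
    fun n => hP3 _ _ _ (hinv n).1 (hinv n).2
  have hVsub : ∀ n, (Q (n+1)).1 ⊆ (Q n).1 := by
    intro n
    have := hP6 (Q n).1 (Q n).2 n (hinv n).1 (hinv n).2
    rw [hQs n]
    exact this
  have htncl : ∀ n, t n ∉ closure (Q (n+1)).1 := by
    intro n
    have := hP7 (Q n).1 (Q n).2 n (hinv n).1 (hinv n).2
    rw [hQs n]
    exact this
  have hchain : ∀ m n : ℕ, m ≤ n → (Q n).1 ⊆ (Q m).1 := by
    intro m n hmn
    induction hmn with
    | refl => exact subset_rfl
    | step h ih => exact (hVsub _).trans ih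
  have hh2 : ∀ n, (Q (n+1)).2 = (Q n).2 + x n := by
    intro n
    rw [hQs n]
  have hhsum : ∀ n, (Q n).2 = ∑ m ∈ Finset.range n, x m := by
    intro n
    induction n with
    | zero => rw [hQ0]; simp
    | succ m ih => rw [hh2 m, Finset.sum_range_succ, ih]
  -- summability and the limit function
  have hsx : Summable x :=
    Summable.of_norm_bounded summable_geometric_two hnorm
  set X : C(K, ℝ) := ∑' n, x n with hXdef
  -- derive the contradiction
  have hbig : ∀ n : ℕ, (n : ℝ) + 1 ≤ ‖T X‖ := by
    intro n
    set g : C(K, ℝ) := X - ∑ m ∈ Finset.range (n+1), x m with hgdef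
    have hgt : g = ∑' m, x (m + (n+1)) := by
      rw [hgdef, sub_eq_iff_eq_add, add_comm]
      exact (Summable.sum_add_tsum_nat_add (n+1) hsx).symm
    have hshift : Summable fun m => x (m + (n+1)) :=
      (summable_nat_add_iff (n+1)).mpr hsx
    have hgz : ∀ s, s ∉ closure (Q (n+1)).1 → g s = 0 := by
      intro s hs
      have heval : g s = ∑' m, (x (m + (n+1))) s := by
        rw [hgt]
        exact (ContinuousMap.evalCLM ℝ s).map_tsum hshift
      rw [heval]
      have hzero : ∀ m : ℕ, (x (m + (n+1))) s = 0 := by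
        intro m
        apply image_eq_zero_of_notMem_tsupport
        intro hmem
        exact hs (subset_closure (hchain (n+1) (m+(n+1)) (Nat.le_add_left _ _)
          (hsupp (m+(n+1)) hmem)))
      rw [tsum_congr hzero, tsum_zero]
    have hgsupp : tsupport ⇑g ⊆ closure (Q (n+1)).1 := by
      apply closure_minimal _ isClosed_closure
      intro s hs
      by_contra hns
      exact hs (hgz s hns)
    have hgnorm : ‖g‖ ≤ 2 := by
      rw [hgt]
      apply tsum_of_norm_bounded hasSum_geometric_two
      intro m
      calc ‖x (m + (n+1))‖ ≤ (1/2 : ℝ)^(m + (n+1)) := hnorm _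
        _ ≤ (1/2 : ℝ)^m := by
            apply pow_le_pow_of_le_one (by norm_num) (by norm_num)
            exact Nat.le_add_right _ _
    have heps : |T g (t n)| ≤ 2 * ε := by
      have h1 : |T g (t n)| ≤ ε * ‖g‖ := by
        apply eps_local ε T hT g (t n)
        intro hmem
        exact htncl n (hgsupp hmem)
      calc |T g (t n)| ≤ ε * ‖g‖ := h1
        _ ≤ ε * 2 := mul_le_mul_of_nonneg_left hgnorm hε
        _ = 2 * ε := mul_comm _ _
    have hhead : |T (Q n).2 (t n)| ≤ ‖T (Q n).2‖ := by
      have := ContinuousMap.norm_coe_le_norm (T (Q n).2) (t n)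
      rwa [Real.norm_eq_abs] at this
    have hXdecomp : X = (Q n).2 + x n + g := by
      rw [hgdef]
      rw [Finset.sum_range_succ, ← hhsum n]
      ring
    have hTX : T X (t n) = T (Q n).2 (t n) + T (x n) (t n) + T g (t n) := by
      rw [hXdecomp, map_add, map_add]
      simp
    have h2 : (n : ℝ) + 1 ≤ |T X (t n)| := by
      have key : ∀ a b c : ℝ, |b| ≤ |a + b + c| + |a| + |c| := by
        intro a b c
        calc |b| = |(a + b + c) + -a + -c| := by
              rw [show (a + b + c) + -a + -c = b by ring]
          _ ≤ |(a + b + c) + -a| + |(-c)| := abs_add_le _ _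
          _ ≤ |a + b + c| + |(-a)| + |(-c)| :=
              add_le_add_left (abs_add_le _ _) _
          _ = |a + b + c| + |a| + |c| := by rw [abs_neg, abs_neg]
      have h4 := key (T (Q n).2 (t n)) (T (x n) (t n)) (T g (t n))
      rw [← hTX] at h4
      have h3 := hval n
      linarith [heps, hhead]
    calc (n : ℝ) + 1 ≤ |T X (t n)| := h2
      _ ≤ ‖T X‖ := by
          have := ContinuousMap.norm_coe_le_norm (T X) (t n)
          rwa [Real.norm_eq_abs] at this
  obtain ⟨N, hN⟩ := exists_nat_gt ‖T X‖
  have := hbig N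
  linarith


end Aux

open Set Filter Topology in
/-- Every `ε`-band preserving linear map on `C(K)`, `K` compact Hausdorff, is
continuous. -/
theorem epsBP_continuous_on_CK {K : Type*} [TopologicalSpace K] [CompactSpace K]
    [T2Space K] (ε : ℝ) (hε : 0 ≤ ε) (T : C(K, ℝ) →ₗ[ℝ] C(K, ℝ))
    (hT : IsEpsBandPreserving ε ⇑T) :
    Continuous T := by
  by_cases hreg : ∀ t : K, ∃ U : Set K, ∃ C : ℝ, IsOpen U ∧ t ∈ U ∧
      ∀ x : C(K, ℝ), tsupport ⇑x ⊆ U → ‖T x‖ ≤ C * ‖x‖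
  · obtain ⟨C, hC⟩ := bounded_of_forall_loc T hreg
    exact AddMonoidHomClass.continuous_of_bound T C hC
  · exfalso
    push_neg at hreg
    obtain ⟨t₀, ht₀⟩ := hreg
    apply no_singular ε hε T hT t₀
    intro V hVo hVm Cb
    have h1 := ht₀ V Cb
    obtain ⟨x, hx1, hx2⟩ := h1 hVo hVm
    exact ⟨x, hx1, not_le.mpr hx2⟩
end

section
/- Let K be a compact Hausdorff space, X a Banach lattice, ε ≥ 0, and let T : C(K,X) → C(K,X) be an ε-band preserving linear map. If f ∈ C(K,X) vanishes on an open set V ⊆ K, then ‖(T f)(t)‖_X ≤ ε·‖f‖ for every t ∈ V. -/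
/-- If `T` is an `ε`-band preserving linear map on `C(K,X)` and `f` vanishes on an open
set `V`, then `‖(T f)(t)‖ ≤ ε ‖f‖` for every `t ∈ V`. -/
theorem epsBP_vanishing_on_open {K X : Type*} [TopologicalSpace K] [CompactSpace K]
    [T2Space K] [NormedAddCommGroup X] [Lattice X] [HasSolidNorm X] [IsOrderedAddMonoid X]
    [NormedSpace ℝ X] [CompleteSpace X]
    (ε : ℝ) (hε : 0 ≤ ε) (T : C(K, X) →ₗ[ℝ] C(K, X)) (hT : IsEpsBandPreserving ε ⇑T)
    (f : C(K, X)) (V : Set K) (hV : IsOpen V) (hfV : ∀ t ∈ V, f t = 0) :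
    ∀ t ∈ V, ‖(T f) t‖ ≤ ε * ‖f‖ := by
  intro t₀ ht₀
  obtain ⟨φ, hφsupp, hφ1, hφ01⟩ :=
    exists_tsupport_one_of_isOpen_isClosed hV isClosed_closure.isCompact (isClosed_singleton (x := t₀))
      (Set.singleton_subset_iff.mpr ht₀)
  set g : C(K, X) := |⟨fun s => φ s • (T f) s, by continuity⟩| with hg
  have hgapp : ∀ s, g s = |φ s • (T f) s| := fun s => rfl
  have hg0 : (0 : C(K, X)) ≤ g := by
    rw [ContinuousMap.le_def]
    intro s
    rw [ContinuousMap.zero_apply, hgapp]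
    exact abs_nonneg _
  have hdisj : |f| ⊓ g = 0 := by
    ext s
    rw [ContinuousMap.inf_apply, ContinuousMap.abs_apply, ContinuousMap.zero_apply]
    by_cases hs : s ∈ V
    · have hfs : f s = 0 := hfV s hs
      have hgs : (0:X) ≤ g s := by rw [hgapp]; exact abs_nonneg _
      calc |f s| ⊓ g s = 0 ⊓ g s := by rw [hfs, abs_zero]
        _ = 0 := inf_eq_left.mpr hgs
    · have hφs : φ s = 0 := image_eq_zero_of_notMem_tsupport (fun h => hs (hφsupp h))
      calc |f s| ⊓ g s = |f s| ⊓ 0 := by rw [hgapp, hφs, zero_smul, abs_zero]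
        _ = 0 := inf_eq_right.mpr (abs_nonneg _)
  have key : ‖|T f| ⊓ g‖ ≤ ε * ‖f‖ := hT f g hg0 hdisj
  have happ : (|T f| ⊓ g) t₀ = |(T f) t₀| := by
    have h1 : φ t₀ = 1 := hφ1 rfl
    show |(T f) t₀| ⊓ g t₀ = |(T f) t₀|
    rw [hgapp, h1, one_smul, inf_idem]
  calc ‖(T f) t₀‖ = ‖|(T f) t₀|‖ := (norm_abs_eq_norm _).symm
    _ = ‖(|T f| ⊓ g) t₀‖ := by rw [happ]
    _ ≤ ‖|T f| ⊓ g‖ := ContinuousMap.norm_coe_le_norm _ _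
    _ ≤ ε * ‖f‖ := key
end

section
/- Let K be a compact Hausdorff space without isolated points, X a Banach lattice, and ε ≥ 0. Then every ε-band preserving linear map T : C(K,X) → C(K,X) is continuous (bounded). -/
section Aux
variable {K X : Type*} [TopologicalSpace K]
    [CompactSpace K] [T2Space K] [NormedAddCommGroup X] [Lattice X] [HasSolidNorm X]
    [IsOrderedAddMonoid X] [NormedSpace ℝ X]

private lemma lemA (ε : ℝ) (T : C(K, X) →ₗ[ℝ] C(K, X)) (hT : IsEpsBandPreserving ε ⇑T)
    (f : C(K, X)) (U : Set K) (hU : IsOpen U) (hf : ∀ x ∈ U, f x = 0)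
    {t : K} (ht : t ∈ U) : ‖T f t‖ ≤ ε * ‖f‖ := by
  obtain ⟨φ, hφ0, hφ1, hφm⟩ := exists_continuous_zero_one_of_isClosed
    (hU.isClosed_compl) (isClosed_singleton (x := t))
    (Set.disjoint_singleton_right.mpr (by simpa using ht))
  set g : C(K, X) := |φ • T f| with hgdef
  have hgx : ∀ x, g x = |φ x • T f x| := by
    intro x
    rw [hgdef, ContinuousMap.abs_apply, ContinuousMap.smul_apply']
  have hg : (0 : C(K, X)) ≤ g := by
    rw [ContinuousMap.le_def]
    intro x
    rw [ContinuousMap.zero_apply, hgx]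
    exact abs_nonneg _
  have hd : |f| ⊓ g = 0 := by
    ext x
    rw [ContinuousMap.inf_apply, ContinuousMap.abs_apply, ContinuousMap.zero_apply]
    by_cases hx : x ∈ U
    · rw [hf x hx, abs_zero]
      exact inf_eq_left.mpr (by rw [hgx]; exact abs_nonneg _)
    · have hz : g x = 0 := by
        have h0 : φ x = 0 := hφ0 hx
        rw [hgx, h0, zero_smul, abs_zero]
      rw [hz]
      exact inf_eq_right.mpr (abs_nonneg _)
  have hkey := hT f g hg hd
  have hgt : g t = |T f t| := by
    have h1 : φ t = 1 := hφ1 (Set.mem_singleton t)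
    rw [hgx, h1, one_smul]
  calc ‖T f t‖ = ‖(|T f| ⊓ g) t‖ := by
        rw [ContinuousMap.inf_apply, ContinuousMap.abs_apply, hgt, inf_idem,
          norm_abs_eq_norm]
    _ ≤ ‖|T f| ⊓ g‖ := ContinuousMap.norm_coe_le_norm _ t
    _ ≤ ε * ‖f‖ := hkey


private lemma locToGlob (T : C(K, X) →ₗ[ℝ] C(K, X))
    (h : ∀ t : K, ∃ (U : Set K) (C : ℝ), IsOpen U ∧ t ∈ U ∧ 0 ≤ C ∧
      ∀ f : C(K, X), (∀ x ∉ U, f x = 0) → ‖T f‖ ≤ C * ‖f‖) :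
    ∃ C : ℝ, ∀ f : C(K, X), ‖T f‖ ≤ C * ‖f‖ := by
  choose U C hUo htU hC hbound using h
  have hcover : (Set.univ : Set K) ⊆ ⋃ t, U t := fun x _ => Set.mem_iUnion.mpr ⟨x, htU x⟩
  obtain ⟨S, hS⟩ := isCompact_univ.elim_finite_subcover U hUo hcover
  have hS' : (Set.univ : Set K) ⊆ ⋃ i : S, U i := by
    intro x hx
    obtain ⟨i, hiS, hxi⟩ := Set.mem_iUnion₂.mp (hS hx)
    exact Set.mem_iUnion.mpr ⟨⟨i, hiS⟩, hxi⟩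
  obtain ⟨b, hb⟩ := BumpCovering.exists_isSubordinate isClosed_univ
    (fun i : S => U i) (fun i => hUo i) hS'
  set p := b.toPartitionOfUnity with hp
  have hsub : p.IsSubordinate (fun i : S => U i) := hb.toPartitionOfUnity
  have hdecomp : ∀ f : C(K, X), f = ∑ i : S, (p i) • f := by
    intro f
    ext x
    rw [ContinuousMap.sum_apply]
    have : ∀ i : S, ((p i) • f) x = p i x • f x := fun i =>
      ContinuousMap.smul_apply' _ _ _
    simp_rw [this]
    rw [← Finset.sum_smul]
    have hsum : ∑ i : S, p i x = 1 := by
      have := p.sum_eq_one (Set.mem_univ x)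
      rwa [finsum_eq_sum_of_fintype] at this
    rw [hsum, one_smul]
  refine ⟨∑ i : S, C i, fun f => ?_⟩
  have hfsmul_norm : ∀ i : S, ‖(p i) • f‖ ≤ ‖f‖ := by
    intro i
    rw [ContinuousMap.norm_le _ (norm_nonneg f)]
    intro x
    rw [ContinuousMap.smul_apply', norm_smul]
    calc ‖p i x‖ * ‖f x‖ ≤ 1 * ‖f x‖ := by
          apply mul_le_mul_of_nonneg_right _ (norm_nonneg _)
          rw [Real.norm_eq_abs, abs_of_nonneg (p.nonneg i x)]
          exact p.le_one i x
      _ = ‖f x‖ := one_mul _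
      _ ≤ ‖f‖ := ContinuousMap.norm_coe_le_norm f x
  calc ‖T f‖ = ‖T (∑ i : S, (p i) • f)‖ := by rw [← hdecomp f]
    _ = ‖∑ i : S, T ((p i) • f)‖ := by rw [map_sum]
    _ ≤ ∑ i : S, ‖T ((p i) • f)‖ := norm_sum_le _ _
    _ ≤ ∑ i : S, C i * ‖f‖ := by
        apply Finset.sum_le_sum
        intro i _
        have hz : ∀ x ∉ U i, ((p i) • f) x = 0 := by
          intro x hx
          have hpx : p i x = 0 := by
            apply image_eq_zero_of_notMem_tsupport
            exact fun hmem => hx (hsub i hmem)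
          rw [ContinuousMap.smul_apply', hpx, zero_smul]
        calc ‖T ((p i) • f)‖ ≤ C i * ‖(p i) • f‖ := hbound i _ hz
          _ ≤ C i * ‖f‖ := mul_le_mul_of_nonneg_left (hfsmul_norm i) (hC i)
    _ = (∑ i : S, C i) * ‖f‖ := (Finset.sum_mul _ _ _).symm


private lemma keyLemma (ε : ℝ) (hε : 0 ≤ ε) (T : C(K, X) →ₗ[ℝ] C(K, X))
    (hT : IsEpsBandPreserving ε ⇑T) (t₀ : K) (hKt : ¬ IsOpen ({t₀} : Set K))
    (hloc : ∀ (U : Set K) (C : ℝ), IsOpen U → t₀ ∈ U → 0 ≤ C →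
      ∃ f : C(K, X), (∀ x ∉ U, f x = 0) ∧ C * ‖f‖ < ‖T f‖) :
    ∀ (W : Set K), IsOpen W → t₀ ∈ W → ∀ C : ℝ, 0 ≤ C →
    ∃ (g : C(K, X)) (s : K) (O G : Set K), IsOpen O ∧ IsOpen G ∧ s ∈ O ∧ O ⊆ G ∧
      closure G ⊆ W ∧ t₀ ∉ closure G ∧ (∀ x ∉ G, g x = 0) ∧ ‖g‖ ≤ 1 ∧
      C < ‖T g s‖ := by
  intro W hW ht₀W C hC
  -- shrink W to W'' with closure inside W
  obtain ⟨W'', hW''o, htW'', hclW''⟩ := normal_exists_closure_subset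
    (isClosed_singleton (x := t₀)) hW (Set.singleton_subset_iff.mpr ht₀W)
  have ht₀W'' : t₀ ∈ W'' := htW'' rfl
  -- get a function with big image supported in W''
  obtain ⟨f₀, hf₀z, hf₀big⟩ := hloc W'' (C + 2 * ε) hW''o ht₀W'' (by positivity)
  have hf₀ne : f₀ ≠ 0 := by
    intro h
    rw [h] at hf₀big
    simp at hf₀big
  have hf₀pos : 0 < ‖f₀‖ := norm_pos_iff.mpr hf₀ne
  set f : C(K, X) := ‖f₀‖⁻¹ • f₀ with hfdef
  have hfnorm : ‖f‖ = 1 := by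
    rw [hfdef, norm_smul, norm_inv, norm_norm, inv_mul_cancel₀ (ne_of_gt hf₀pos)]
  have hfz : ∀ x ∉ W'', f x = 0 := by
    intro x hx
    rw [hfdef, ContinuousMap.smul_apply, hf₀z x hx, smul_zero]
  have hTf : C + 2 * ε < ‖T f‖ := by
    have : T f = ‖f₀‖⁻¹ • T f₀ := by rw [hfdef, map_smul]
    rw [this, norm_smul, norm_inv, norm_norm, inv_mul_eq_div, lt_div_iff₀ hf₀pos]
    exact hf₀big
  -- find a big point s ≠ t₀
  have hAne : ∃ x, C + 2 * ε < ‖T f x‖ := by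
    by_contra hno
    push_neg at hno
    have : ‖T f‖ ≤ C + 2 * ε := (ContinuousMap.norm_le _ (by positivity)).mpr hno
    linarith
  have hAopen : IsOpen {x : K | C + 2 * ε < ‖T f x‖} :=
    isOpen_lt continuous_const ((T f).continuous.norm)
  have hdense : Dense ({t₀}ᶜ : Set K) :=
    dense_compl_singleton_iff_not_open.mpr hKt
  obtain ⟨s, hsA, hst⟩ := hdense.inter_open_nonempty _ hAopen hAne
  have hsA' : C + 2 * ε < ‖T f s‖ := hsA
  have hsne : s ≠ t₀ := hst
  -- s is in the support of f, hence in W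
  have hs_ts : s ∈ tsupport f := by
    by_contra hns
    have hle := lemA ε T hT f (tsupport f)ᶜ (isClosed_tsupport f).isOpen_compl
      (fun x hx => image_eq_zero_of_notMem_tsupport hx) hns
    rw [hfnorm, mul_one] at hle
    linarith
  have hsW : s ∈ W := by
    apply hclW''
    refine closure_mono (fun x hx => ?_) hs_ts
    by_contra hxn
    exact hx (hfz x hxn)
  -- build nested neighborhoods of s avoiding t₀
  have hWt : IsOpen (W \ {t₀}) := hW.sdiff isClosed_singleton
  obtain ⟨Vs, hVso, hsVs', hclVs⟩ := normal_exists_closure_subset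
    (isClosed_singleton (x := s)) hWt
    (Set.singleton_subset_iff.mpr ⟨hsW, by simpa using hsne⟩)
  have hsVs : s ∈ Vs := hsVs' rfl
  obtain ⟨V', hV'o, hsV'', hclV'⟩ := normal_exists_closure_subset
    (isClosed_singleton (x := s)) hVso (Set.singleton_subset_iff.mpr hsVs)
  have hsV' : s ∈ V' := hsV'' rfl
  obtain ⟨ψ, hψ0, hψ1, hψm⟩ := exists_continuous_zero_one_of_isClosed
    hVso.isClosed_compl isClosed_closure
    (Set.disjoint_left.mpr fun x hx hx2 => hx (hclV' hx2))
  set g : C(K, X) := ψ • f with hgdef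
  have hgx : ∀ x, g x = ψ x • f x := fun x => ContinuousMap.smul_apply' _ _ _
  have hgz : ∀ x ∉ Vs, g x = 0 := by
    intro x hx
    have h0 : ψ x = 0 := hψ0 hx
    rw [hgx, h0, zero_smul]
  have hgn : ‖g‖ ≤ 1 := by
    rw [ContinuousMap.norm_le _ zero_le_one]
    intro x
    rw [hgx, norm_smul, Real.norm_eq_abs, abs_of_nonneg (hψm x).1]
    calc ψ x * ‖f x‖ ≤ 1 * ‖f x‖ :=
          mul_le_mul_of_nonneg_right (hψm x).2 (norm_nonneg _)
      _ = ‖f x‖ := one_mul _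
      _ ≤ ‖f‖ := ContinuousMap.norm_coe_le_norm f x
      _ = 1 := hfnorm
  have hfg : ∀ x ∈ V', (f - g) x = 0 := by
    intro x hx
    have h1 : ψ x = 1 := hψ1 (subset_closure hx)
    rw [ContinuousMap.sub_apply, hgx, h1, one_smul, sub_self]
  have hTfg : ‖T (f - g) s‖ ≤ 2 * ε := by
    calc ‖T (f - g) s‖ ≤ ε * ‖f - g‖ := lemA ε T hT (f - g) V' hV'o hfg hsV'
      _ ≤ ε * 2 := by
          apply mul_le_mul_of_nonneg_left _ hε
          calc ‖f - g‖ ≤ ‖f‖ + ‖g‖ := norm_sub_le _ _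
            _ ≤ 1 + 1 := add_le_add hfnorm.le hgn
            _ = 2 := by norm_num
      _ = 2 * ε := mul_comm _ _
  have hTgs : C < ‖T g s‖ := by
    have hTg : T g = T f - T (f - g) := by rw [map_sub]; abel
    have : ‖T g s‖ = ‖T f s - T (f - g) s‖ := by
      rw [hTg, ContinuousMap.sub_apply]
    rw [this]
    have := norm_sub_norm_le (T f s) (T (f - g) s)
    linarith
  exact ⟨g, s, V', Vs, hV'o, hVso, hsV',
    fun x hx => hclV' (subset_closure hx),
    fun x hx => (hclVs hx).1, fun h => (hclVs h).2 rfl, hgz, hgn, hTgs⟩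


end Aux

/-- If `K` is a compact Hausdorff space without isolated points and `X` is a Banach
lattice, then every `ε`-band preserving linear map on `C(K,X)` is continuous. -/
theorem epsBP_continuous_on_CKX_no_isolated {K X : Type*} [TopologicalSpace K]
    [CompactSpace K] [T2Space K] [NormedAddCommGroup X] [Lattice X] [HasSolidNorm X]
    [IsOrderedAddMonoid X] [NormedSpace ℝ X]
    [CompleteSpace X] (hK : ∀ t : K, ¬ IsOpen ({t} : Set K))
    (ε : ℝ) (hε : 0 ≤ ε) (T : C(K, X) →ₗ[ℝ] C(K, X)) (hT : IsEpsBandPreserving ε ⇑T) :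
    Continuous T := by
  by_contra hcont
  have hl : ¬ ∀ t : K, ∃ (U : Set K) (C : ℝ), IsOpen U ∧ t ∈ U ∧ 0 ≤ C ∧
      ∀ f : C(K, X), (∀ x ∉ U, f x = 0) → ‖T f‖ ≤ C * ‖f‖ := by
    intro hl
    obtain ⟨C, hC⟩ := locToGlob T hl
    exact hcont (AddMonoidHomClass.continuous_of_bound T C hC)
  push_neg at hl
  obtain ⟨t₀, hloc⟩ := hl
  have key := keyLemma ε hε T hT t₀ (hK t₀) hloc
  choose gF sF OF GF hOo hGo hsO hOG hGW htG hgz hgn hTg using key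
  set Cf : ℕ → ℝ := fun n => 2 ^ n * (n + 3 * ε) with hCfdef
  have hCf0 : ∀ n, (0 : ℝ) ≤ Cf n := fun n => by
    rw [hCfdef]; positivity
  let nxt : ℕ → {W : Set K // IsOpen W ∧ t₀ ∈ W} → {W : Set K // IsOpen W ∧ t₀ ∈ W} :=
    fun n W => ⟨W.1 \ closure (GF W.1 W.2.1 W.2.2 (Cf n) (hCf0 n)),
      W.2.1.sdiff isClosed_closure, W.2.2, htG W.1 W.2.1 W.2.2 (Cf n) (hCf0 n)⟩
  let Ws : ℕ → {W : Set K // IsOpen W ∧ t₀ ∈ W} :=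
    fun n => Nat.rec ⟨Set.univ, isOpen_univ, Set.mem_univ t₀⟩ nxt n
  let g : ℕ → C(K, X) := fun n => gF (Ws n).1 (Ws n).2.1 (Ws n).2.2 (Cf n) (hCf0 n)
  let s : ℕ → K := fun n => sF (Ws n).1 (Ws n).2.1 (Ws n).2.2 (Cf n) (hCf0 n)
  let O : ℕ → Set K := fun n => OF (Ws n).1 (Ws n).2.1 (Ws n).2.2 (Cf n) (hCf0 n)
  let G : ℕ → Set K := fun n => GF (Ws n).1 (Ws n).2.1 (Ws n).2.2 (Cf n) (hCf0 n)
  have hWsucc : ∀ n, (Ws (n + 1)).1 = (Ws n).1 \ closure (G n) := fun n => rfl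
  have hGWs : ∀ n, closure (G n) ⊆ (Ws n).1 := fun n => hGW _ _ _ _ _
  have hOsubG : ∀ n, O n ⊆ G n := fun n => hOG _ _ _ _ _
  have hmono : ∀ m n, m ≤ n → (Ws n).1 ⊆ (Ws m).1 := by
    intro m n h
    induction n, h using Nat.le_induction with
    | base => exact subset_rfl
    | succ n hmn ih =>
        refine subset_trans ?_ ih
        rw [hWsucc n]
        exact Set.diff_subset
  have hzero : ∀ m n, m ≠ n → ∀ x ∈ O n, g m x = 0 := by
    intro m n hmn x hx
    rcases lt_or_gt_of_ne hmn with h | h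
    · apply hgz
      intro hxG
      have hx1 : x ∈ (Ws (m + 1)).1 :=
        hmono (m + 1) n h (hGWs n (subset_closure (hOsubG n hx)))
      rw [hWsucc m] at hx1
      exact hx1.2 (subset_closure hxG)
    · apply hgz
      intro hxG
      have hx1 : x ∈ (Ws (n + 1)).1 :=
        hmono (n + 1) m h (hGWs m (subset_closure hxG))
      rw [hWsucc n] at hx1
      exact hx1.2 (subset_closure (hOsubG n hx))
  set c : ℕ → ℝ := fun n => (2⁻¹ : ℝ) ^ n with hcdef
  have hc0 : ∀ n, (0 : ℝ) ≤ c n := fun n => by rw [hcdef]; positivity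
  have hc1 : ∀ n, c n ≤ 1 := fun n => by
    rw [hcdef]
    exact pow_le_one₀ (by norm_num) (by norm_num)
  have hgnorm : ∀ n, ‖g n‖ ≤ 1 := fun n => hgn _ _ _ _ _
  have hbound : ∀ n, ‖c n • g n‖ ≤ c n := by
    intro n
    rw [norm_smul, Real.norm_eq_abs, abs_of_nonneg (hc0 n)]
    calc c n * ‖g n‖ ≤ c n * 1 := mul_le_mul_of_nonneg_left (hgnorm n) (hc0 n)
      _ = c n := mul_one _
  have hcgeom : Summable c := by
    rw [hcdef]
    exact summable_geometric_of_lt_one (by norm_num) (by norm_num)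
  have hsum : Summable (fun n => c n • g n) :=
    Summable.of_norm_bounded hcgeom hbound
  have hnormsum : Summable (fun n => ‖c n • g n‖) :=
    Summable.of_nonneg_of_le (fun n => norm_nonneg _) hbound hcgeom
  set F : C(K, X) := ∑' n, c n • g n with hFdef
  have hcsum : ∑' n, c n = 2 := by
    rw [hcdef]
    rw [tsum_geometric_of_lt_one (by norm_num) (by norm_num)]
    norm_num
  have hFnorm : ‖F‖ ≤ 2 := by
    calc ‖F‖ ≤ ∑' n, ‖c n • g n‖ := norm_tsum_le_tsum_norm hnormsum
      _ ≤ ∑' n, c n := Summable.tsum_le_tsum hbound hnormsum hcgeom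
      _ = 2 := hcsum
  have hFx : ∀ x, F x = ∑' n, c n • g n x := by
    intro x
    have h1 := (ContinuousMap.evalCLM (M := X) ℝ x).map_tsum hsum
    have h2 : ∀ n, (ContinuousMap.evalCLM (M := X) ℝ x) (c n • g n) = c n • g n x := by
      intro n
      simp [ContinuousMap.evalCLM]
    have h3 : (ContinuousMap.evalCLM (M := X) ℝ x) F = F x := rfl
    rw [← h3, hFdef, h1]
    exact tsum_congr h2
  have hvan : ∀ n, ∀ x ∈ O n, (F - c n • g n) x = 0 := by
    intro n x hx
    rw [ContinuousMap.sub_apply, hFx x,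
      tsum_eq_single n (fun m hm => by rw [hzero m n hm x hx, smul_zero]),
      ContinuousMap.smul_apply, sub_self]
  have hTgs : ∀ n, Cf n < ‖T (g n) (s n)‖ := fun n => hTg _ _ _ _ _
  have hfinal : ∀ n : ℕ, (n : ℝ) ≤ ‖T F‖ := by
    intro n
    set h : C(K, X) := F - c n • g n with hhdef
    have hTh : ‖T h (s n)‖ ≤ ε * 3 := by
      have h1 : ‖T h (s n)‖ ≤ ε * ‖h‖ :=
        lemA ε T hT h (O n) (hOo _ _ _ _ _) (hvan n) (hsO _ _ _ _ _)
      have h2 : ‖h‖ ≤ 3 := by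
        calc ‖h‖ ≤ ‖F‖ + ‖c n • g n‖ := norm_sub_le _ _
          _ ≤ 2 + 1 := add_le_add hFnorm (le_trans (hbound n) (hc1 n))
          _ = 3 := by norm_num
      calc ‖T h (s n)‖ ≤ ε * ‖h‖ := h1
        _ ≤ ε * 3 := mul_le_mul_of_nonneg_left h2 hε
    have hdec : F = c n • g n + h := by rw [hhdef]; abel
    have heval : T F (s n) = c n • (T (g n) (s n)) + T h (s n) := by
      conv_lhs => rw [hdec]
      rw [map_add, map_smul, ContinuousMap.add_apply, ContinuousMap.smul_apply]
    have h3 : c n * ‖T (g n) (s n)‖ ≤ ‖T F (s n)‖ + ‖T h (s n)‖ := by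
      have := norm_le_add_norm_add (c n • T (g n) (s n)) (T h (s n))
      rw [← heval, norm_smul, Real.norm_eq_abs, abs_of_nonneg (hc0 n)] at this
      exact this
    have hc : c n * Cf n = n + 3 * ε := by
      rw [hcdef, hCfdef]
      simp only []
      rw [inv_pow, inv_mul_cancel_left₀ (by positivity : ((2 : ℝ) ^ n) ≠ 0)]
    have h4 : (n : ℝ) + 3 * ε ≤ c n * ‖T (g n) (s n)‖ := by
      rw [← hc]
      exact mul_le_mul_of_nonneg_left (hTgs n).le (hc0 n)
    have h5 : ‖T F (s n)‖ ≤ ‖T F‖ := ContinuousMap.norm_coe_le_norm _ _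
    linarith
  obtain ⟨n, hn⟩ := exists_nat_gt ‖T F‖
  exact absurd (hfinal n) (not_le.mpr hn)
end
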